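/- arXiv:1112.5718 — 4 statements merged into one kernel-verified Lean document; each statement's English description precedes it below -/
import Mathlib

section
/- If there exists a point z₀ ∈ U such that (π(|h|²) − |h|²)(z₀) = 0 for every h ∈ C(K) with Ψ(h) = h, then π(|h|²) = |h|² identically on K for every such h. -/
open MeasureTheory Filter Topology ComplexOrder
set_option linter.unusedSectionVars false

/-- `Φ` is a Markov operator on the bounded Borel measurable functions on `U`:
for each `x` there is a Borel probability measure `P x` representing `Φ` at `x`. -/
def IsMarkovOperator {U : Type*} [MeasurableSpace U]
    (Φ : (U → ℂ) → (U → ℂ)) : Prop :=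
  ∀ x : U, ∃ P : Measure U, IsProbabilityMeasure P ∧
    ∀ f : U → ℂ, Measurable f → (∃ C : ℝ, ∀ y, ‖f y‖ ≤ C) →
      Φ f x = ∫ y, f y ∂P

/-- `Φ` has the strong Feller property: it maps bounded Borel measurable
functions to continuous functions. -/
def HasStrongFeller {U : Type*} [MeasurableSpace U] [TopologicalSpace U]
    (Φ : (U → ℂ) → (U → ℂ)) : Prop :=
  ∀ f : U → ℂ, Measurable f → (∃ C : ℝ, ∀ y, ‖f y‖ ≤ C) → Continuous (Φ f)

/-- Boundary condition (A): for each boundary point `x` there is a barrier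
`h ∈ C(K)` with `h x = 0`, `h < 0` off `x`, and `Φ (h_U) ≥ h_U` on `U`. -/
def CondA {K : Type*} [TopologicalSpace K] (U : Set K)
    (Φ : (↥U → ℂ) → (↥U → ℂ)) : Prop :=
  ∀ x ∈ Uᶜ, ∃ h : C(K, ℂ), h x = 0 ∧ (∀ y : K, y ≠ x → h y < 0) ∧
    ∀ u : ↥U, h u.1 ≤ Φ (fun v : ↥U => h v.1) u

/-- Maximum principle (B): every real-valued `g ∈ C(K)` with `Φ (g_U) ≥ g_U`
on `U` attaining its global maximum inside `U` is constant. -/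
def CondB {K : Type*} [TopologicalSpace K] (U : Set K)
    (Φ : (↥U → ℂ) → (↥U → ℂ)) : Prop :=
  ∀ g : C(K, ℂ), (∀ x : K, (g x).im = 0) →
    (∀ u : ↥U, g u.1 ≤ Φ (fun v : ↥U => g v.1) u) →
    (∃ z ∈ U, ∀ x : K, g x ≤ g z) →
    ∀ x y : K, g x = g y

/-- The map `Ψ` : `Ψ f = Φ (f_U)` on `U` and `Ψ f = f` on `∂U = K \ U`. -/
noncomputable def psiFun {K : Type*} (U : Set K)
    (Φ : (↥U → ℂ) → (↥U → ℂ)) (f : K → ℂ) : K → ℂ :=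
  open Classical in fun x => if hx : x ∈ U then Φ (fun v : ↥U => f v.1) ⟨x, hx⟩ else f x

section CS
variable {α : Type*} [MeasurableSpace α] (P : Measure α) [IsProbabilityMeasure P]

lemma cs_step (g : α → ℂ) (hm : Measurable g) {C : ℝ} (hC : ∀ v, ‖g v‖ ≤ C)
    {c : ℂ} (hc : ∫ v, g v ∂P = c) : ‖c‖^2 ≤ ∫ v, ‖g v‖^2 ∂P := by
  have hnorm : ∀ z : ℂ, ‖z‖^2 = z.re^2 + z.im^2 := fun z => by
    rw [Complex.sq_norm, Complex.normSq_apply]; ring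
  have hgi : Integrable g P :=
    ⟨hm.aestronglyMeasurable, HasFiniteIntegral.of_bounded (ae_of_all _ hC)⟩
  have hre : Integrable (fun v => (g v).re) P := by
    simpa [RCLike.re_to_complex] using hgi.re
  have him : Integrable (fun v => (g v).im) P := by
    simpa [RCLike.im_to_complex] using hgi.im
  have hr : Integrable (fun v => ‖g v‖^2) P := by
    refine ⟨((hm.norm.pow_const 2).aestronglyMeasurable), HasFiniteIntegral.of_bounded
      (C := C^2) (ae_of_all _ fun v => ?_)⟩
    have : ‖g v‖^2 ≤ C^2 := pow_le_pow_left₀ (norm_nonneg _) (hC v) 2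
    simpa [abs_of_nonneg (sq_nonneg ‖g v‖)] using this
  have hire : ∫ v, (g v).re ∂P = c.re := by
    have h1 := integral_re (μ := P) hgi
    simp only [RCLike.re_to_complex] at h1
    rw [h1, hc]
  have hiim : ∫ v, (g v).im ∂P = c.im := by
    have h1 := integral_im (μ := P) hgi
    simp only [RCLike.im_to_complex] at h1
    rw [h1, hc]
  have key : 0 ≤ ∫ v, ‖g v - c‖^2 ∂P := integral_nonneg fun v => sq_nonneg _
  have hexp : (fun v => ‖g v - c‖^2)
      = fun v => (‖g v‖^2 - 2*c.re*(g v).re - 2*c.im*(g v).im) + (c.re^2 + c.im^2) := by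
    funext v
    rw [hnorm, hnorm]
    simp only [Complex.sub_re, Complex.sub_im]
    ring
  rw [hexp] at key
  have I2 : Integrable (fun v => 2*c.re*(g v).re) P := hre.const_mul _
  have I3 : Integrable (fun v => 2*c.im*(g v).im) P := him.const_mul _
  have I4 : Integrable (fun v => ‖g v‖^2 - 2*c.re*(g v).re) P := hr.sub I2
  have I5 : Integrable (fun v => ‖g v‖^2 - 2*c.re*(g v).re - 2*c.im*(g v).im) P := I4.sub I3
  rw [integral_add I5 (integrable_const _), integral_sub I4 I3,
    integral_sub hr I2, integral_const_mul, integral_const_mul,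
    hire, hiim, integral_const] at key
  have hc2 : ‖c‖^2 = c.re^2 + c.im^2 := hnorm c
  simp only [measureReal_def, measure_univ, ENNReal.toReal_one, smul_eq_mul, one_mul] at key
  nlinarith [key]

end CS

-- barrier constant lemma
lemma exists_barrier_const {K : Type*} [TopologicalSpace K] [CompactSpace K]
    {g b : K → ℝ} (hg : Continuous g) (hb : Continuous b) {x : K}
    (hbx : b x = 0) (hbneg : ∀ y, y ≠ x → b y < 0) {ε : ℝ} (hε : 0 < ε) :
    ∃ C : ℝ, 0 ≤ C ∧ ∀ y, g y ≤ g x + ε + C * (-(b y)) := by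
  have hble : ∀ y, b y ≤ 0 := by
    intro y
    by_cases hyx : y = x
    · simp [hyx, hbx]
    · exact (hbneg y hyx).le
  have hKne : Nonempty K := ⟨x⟩
  obtain ⟨ymax, _, hymax⟩ := isCompact_univ.exists_isMaxOn Set.univ_nonempty
    hg.continuousOn
  set M := g ymax with hM
  have hMle : ∀ y, g y ≤ M := fun y => hymax (Set.mem_univ y)
  set S : Set K := {y | g x + ε ≤ g y} with hS
  have hSclosed : IsClosed S := isClosed_le continuous_const hg
  have hScompact : IsCompact S := hSclosed.isCompact
  rcases S.eq_empty_or_nonempty with hSe | hSne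
  · refine ⟨0, le_rfl, fun y => ?_⟩
    have : y ∉ S := by rw [hSe]; exact Set.notMem_empty y
    have h1 : ¬ (g x + ε ≤ g y) := this
    have h2 := lt_of_not_ge h1
    linarith
  · obtain ⟨y₀, hy₀S, hy₀max⟩ := hScompact.exists_isMaxOn hSne hb.continuousOn
    have hxS : x ∉ S := by
      intro hxS
      have : g x + ε ≤ g x := hxS
      linarith
    have hy₀x : y₀ ≠ x := fun h => hxS (h ▸ hy₀S)
    set δ := -(b y₀) with hδ
    have hδpos : 0 < δ := by
      have := hbneg y₀ hy₀x
      simp only [hδ]; linarith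
    set C := max 0 ((M - (g x + ε)) / δ) with hC
    refine ⟨C, le_max_left _ _, fun y => ?_⟩
    by_cases hyS : y ∈ S
    · have h1 : b y ≤ b y₀ := hy₀max hyS
      have h2 : δ ≤ -(b y) := by simp only [hδ]; linarith
      have h3 : C * δ ≤ C * (-(b y)) :=
        mul_le_mul_of_nonneg_left h2 (le_max_left _ _)
      have h4 : (M - (g x + ε)) / δ ≤ C := le_max_right _ _
      have h5 : M - (g x + ε) ≤ C * δ := by
        rw [div_le_iff₀ hδpos] at h4
        linarith
      have := hMle y
      linarith
    · have : ¬ (g x + ε ≤ g y) := hyS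
      have h1 : g y < g x + ε := lt_of_not_ge this
      have h2 : 0 ≤ C * (-(b y)) :=
        mul_nonneg (le_max_left _ _) (by linarith [hble y])
      linarith

namespace Stmt14

variable {K : Type*} [MetricSpace K] [CompactSpace K] [MeasurableSpace K] [BorelSpace K]
variable {U : Set K} {Φ : (↥U → ℂ) → (↥U → ℂ)}

/-- bounded measurable -/
def Adm {K : Type*} [MeasurableSpace K] (f : K → ℂ) : Prop :=
  Measurable f ∧ ∃ C : ℝ, ∀ y, ‖f y‖ ≤ C

lemma Adm.restrict_meas {f : K → ℂ} (hf : Adm f) :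
    Measurable (fun v : ↥U => f v.1) := hf.1.comp measurable_subtype_coe

lemma Adm.restrict_bdd {f : K → ℂ} (hf : Adm f) :
    ∃ C : ℝ, ∀ v : ↥U, ‖f v.1‖ ≤ C := hf.2.imp fun _ hC v => hC v.1

lemma Adm.integrable {f : K → ℂ} (hf : Adm f) (P : Measure ↥U)
    [IsFiniteMeasure P] : Integrable (fun v : ↥U => f v.1) P := by
  obtain ⟨C, hC⟩ := hf.restrict_bdd (U := U)
  exact ⟨hf.restrict_meas.aestronglyMeasurable,
    HasFiniteIntegral.of_bounded (ae_of_all _ hC)⟩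

lemma psi_mem {f : K → ℂ} {x : K} (hx : x ∈ U) :
    psiFun U Φ f x = Φ (fun v : ↥U => f v.1) ⟨x, hx⟩ := dif_pos hx

lemma psi_not_mem {f : K → ℂ} {x : K} (hx : x ∉ U) :
    psiFun U Φ f x = f x := dif_neg hx

lemma exists_repr (hM : IsMarkovOperator Φ) {x : K} (hx : x ∈ U) :
    ∃ P : Measure ↥U, IsProbabilityMeasure P ∧
      ∀ f : K → ℂ, Adm f → psiFun U Φ f x = ∫ v, f v.1 ∂P := by
  obtain ⟨P, hPP, hrep⟩ := hM ⟨x, hx⟩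
  exact ⟨P, hPP, fun f hf => by
    rw [psi_mem hx, hrep _ hf.restrict_meas hf.restrict_bdd]⟩

lemma Adm.psi (hUo : IsOpen U) (hM : IsMarkovOperator Φ) (hSF : HasStrongFeller Φ)
    {f : K → ℂ} (hf : Adm f) : Adm (psiFun U Φ f) := by
  constructor
  · have hc : Continuous (Φ (fun v : ↥U => f v.1)) :=
      hSF _ hf.restrict_meas hf.restrict_bdd
    unfold psiFun
    classical
    exact Measurable.dite (f := fun u : ↥U => Φ (fun v : ↥U => f v.1) u)
      hc.measurable ((hf.1.comp measurable_subtype_coe)) hUo.measurableSet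
  · obtain ⟨C, hC⟩ := hf.2
    refine ⟨C, fun y => ?_⟩
    by_cases hy : y ∈ U
    · obtain ⟨P, hPP, hrep⟩ := exists_repr hM hy
      rw [hrep f hf]
      calc ‖∫ v, f v.1 ∂P‖ ≤ C * (P Set.univ).toReal :=
            norm_integral_le_of_norm_le_const (ae_of_all _ fun v => hC v.1)
        _ = C := by simp
    · rw [psi_not_mem hy]; exact hC y

lemma psi_im (hM : IsMarkovOperator Φ) {f : K → ℂ} (hf : Adm f)
    (him : ∀ y, (f y).im = 0) : ∀ y, (psiFun U Φ f y).im = 0 := by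
  intro y
  by_cases hy : y ∈ U
  · obtain ⟨P, hPP, hrep⟩ := exists_repr hM hy
    rw [hrep f hf]
    have h1 := integral_im (μ := P) (hf.integrable P)
    have h2 : ∫ v : ↥U, (f v.1).im ∂P = 0 := by
      simp [him]
    simpa [RCLike.im_to_complex, h2] using h1.symm
  · rw [psi_not_mem hy]; exact him y

lemma psi_mono (hM : IsMarkovOperator Φ) {f g : K → ℂ} (hf : Adm f) (hg : Adm g)
    (hfg : ∀ y, f y ≤ g y) : ∀ y, psiFun U Φ f y ≤ psiFun U Φ g y := by
  intro y
  by_cases hy : y ∈ U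
  · obtain ⟨P, hPP, hrep⟩ := exists_repr hM hy
    rw [hrep f hf, hrep g hg]
    rw [Complex.le_def]
    have hfi := hf.integrable P
    have hgi := hg.integrable P
    constructor
    · have h1 := integral_re (μ := P) hfi
      have h2 := integral_re (μ := P) hgi
      simp only [RCLike.re_to_complex] at h1 h2
      rw [← h1, ← h2]
      refine integral_mono ?_ ?_ (fun v => (Complex.le_def.1 (hfg v.1)).1)
      · simpa [RCLike.re_to_complex] using hfi.re
      · simpa [RCLike.re_to_complex] using hgi.re
    · have h1 := integral_im (μ := P) hfi
      have h2 := integral_im (μ := P) hgi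
      simp only [RCLike.im_to_complex] at h1 h2
      rw [← h1, ← h2]
      exact integral_congr_ae (ae_of_all _ fun v => (Complex.le_def.1 (hfg v.1)).2)
  · rw [psi_not_mem hy, psi_not_mem hy]; exact hfg y

lemma psi_affine (hM : IsMarkovOperator Φ) {f : K → ℂ} (hf : Adm f) (c d : ℂ) :
    ∀ y, psiFun U Φ (fun z => c - d * f z) y = c - d * psiFun U Φ f y := by
  intro y
  have hadm : Adm (fun z => c - d * f z) := by
    obtain ⟨C, hC⟩ := hf.2
    refine ⟨measurable_const.sub (measurable_const.mul hf.1), ‖c‖ + ‖d‖ * C, fun z => ?_⟩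
    calc ‖c - d * f z‖ ≤ ‖c‖ + ‖d * f z‖ := norm_sub_le _ _
      _ = ‖c‖ + ‖d‖ * ‖f z‖ := by rw [norm_mul]
      _ ≤ ‖c‖ + ‖d‖ * C := by
          have := mul_le_mul_of_nonneg_left (hC z) (norm_nonneg d)
          linarith
  by_cases hy : y ∈ U
  · obtain ⟨P, hPP, hrep⟩ := exists_repr hM hy
    rw [hrep _ hadm, hrep f hf]
    rw [integral_sub (integrable_const c) ((hf.integrable P).const_mul d),
      integral_const_mul]
    simp
  · rw [psi_not_mem hy, psi_not_mem hy]

lemma psi_sub (hM : IsMarkovOperator Φ) {f g : K → ℂ} (hf : Adm f) (hg : Adm g) :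
    ∀ y, psiFun U Φ (fun z => f z - g z) y = psiFun U Φ f y - psiFun U Φ g y := by
  intro y
  have hadm : Adm (fun z => f z - g z) := by
    obtain ⟨C, hC⟩ := hf.2
    obtain ⟨D, hD⟩ := hg.2
    exact ⟨hf.1.sub hg.1, C + D, fun z =>
      (norm_sub_le _ _).trans (add_le_add (hC z) (hD z))⟩
  by_cases hy : y ∈ U
  · obtain ⟨P, hPP, hrep⟩ := exists_repr hM hy
    rw [hrep _ hadm, hrep f hf, hrep g hg,
      integral_sub (hf.integrable P) (hg.integrable P)]
  · rw [psi_not_mem hy, psi_not_mem hy, psi_not_mem hy]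

lemma psi_continuousOn (hSF : HasStrongFeller Φ) {f : K → ℂ} (hf : Adm f) :
    ContinuousOn (psiFun U Φ f) U := by
  rw [continuousOn_iff_continuous_restrict]
  have heq : U.restrict (psiFun U Φ f) = Φ (fun v : ↥U => f v.1) := by
    funext u
    show psiFun U Φ f u.1 = _
    rw [psi_mem u.2]
  rw [show U.domRestrict (psiFun U Φ f) = U.restrict (psiFun U Φ f) from rfl, heq]
  exact hSF _ hf.restrict_meas hf.restrict_bdd

section Iterates

lemma iter_adm (hUo : IsOpen U) (hM : IsMarkovOperator Φ) (hSF : HasStrongFeller Φ)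
    {f : K → ℂ} (hf : Adm f) : ∀ n, Adm ((psiFun U Φ)^[n] f) := by
  intro n
  induction n with
  | zero => simpa using hf
  | succ n ih => rw [Function.iterate_succ_apply']; exact ih.psi hUo hM hSF

lemma iter_bound (hM : IsMarkovOperator Φ) (hUo : IsOpen U) (hSF : HasStrongFeller Φ)
    {f : K → ℂ} (hf : Adm f) {C : ℝ} (hC : ∀ y, ‖f y‖ ≤ C) :
    ∀ n y, ‖(psiFun U Φ)^[n] f y‖ ≤ C := by
  intro n
  induction n with
  | zero => simpa using hC
  | succ n ih =>
    intro y
    rw [Function.iterate_succ_apply']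
    by_cases hy : y ∈ U
    · obtain ⟨P, hPP, hrep⟩ := exists_repr hM hy
      rw [hrep _ (iter_adm hUo hM hSF hf n)]
      calc ‖∫ v, (psiFun U Φ)^[n] f v.1 ∂P‖ ≤ C * (P Set.univ).toReal :=
            norm_integral_le_of_norm_le_const (ae_of_all _ fun v => ih v.1)
        _ = C := by simp
    · rw [psi_not_mem hy]; exact ih y

lemma iter_im (hUo : IsOpen U) (hM : IsMarkovOperator Φ) (hSF : HasStrongFeller Φ)
    {f : K → ℂ} (hf : Adm f) (him : ∀ y, (f y).im = 0) :
    ∀ n y, ((psiFun U Φ)^[n] f y).im = 0 := by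
  intro n
  induction n with
  | zero => simpa using him
  | succ n ih =>
    intro y
    rw [Function.iterate_succ_apply']
    exact psi_im hM (iter_adm hUo hM hSF hf n) ih y

lemma iter_mono (hUo : IsOpen U) (hM : IsMarkovOperator Φ) (hSF : HasStrongFeller Φ)
    {f g : K → ℂ} (hf : Adm f) (hg : Adm g) (hfg : ∀ y, f y ≤ g y) :
    ∀ n y, (psiFun U Φ)^[n] f y ≤ (psiFun U Φ)^[n] g y := by
  intro n
  induction n with
  | zero => simpa using hfg
  | succ n ih =>
    intro y
    rw [Function.iterate_succ_apply', Function.iterate_succ_apply']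
    exact psi_mono hM (iter_adm hUo hM hSF hf n) (iter_adm hUo hM hSF hg n) ih y

lemma iter_superfix (hUo : IsOpen U) (hM : IsMarkovOperator Φ) (hSF : HasStrongFeller Φ)
    {f : K → ℂ} (hf : Adm f) (hfix : ∀ y, f y ≤ psiFun U Φ f y) :
    ∀ n y, f y ≤ (psiFun U Φ)^[n] f y := by
  intro n
  induction n with
  | zero => simp
  | succ n ih =>
    intro y
    rw [Function.iterate_succ_apply]
    calc f y ≤ (psiFun U Φ)^[n] f y := ih y
      _ ≤ (psiFun U Φ)^[n] (psiFun U Φ f) y :=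
        iter_mono hUo hM hSF hf (hf.psi hUo hM hSF) hfix n y

lemma iter_boundary {f : K → ℂ} {x : K} (hx : x ∉ U) :
    ∀ n, (psiFun U Φ)^[n] f x = f x := by
  intro n
  induction n with
  | zero => simp
  | succ n ih => rw [Function.iterate_succ_apply', psi_not_mem hx]; exact ih

lemma iter_affine (hUo : IsOpen U) (hM : IsMarkovOperator Φ) (hSF : HasStrongFeller Φ)
    {f : K → ℂ} (hf : Adm f) (c d : ℂ) :
    ∀ n y, (psiFun U Φ)^[n] (fun z => c - d * f z) y
      = c - d * (psiFun U Φ)^[n] f y := by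
  intro n
  induction n with
  | zero => simp
  | succ n ih =>
    intro y
    rw [Function.iterate_succ_apply', Function.iterate_succ_apply']
    have : (psiFun U Φ)^[n] (fun z => c - d * f z)
        = fun z => c - d * (psiFun U Φ)^[n] f z := funext ih
    rw [this]
    exact psi_affine hM (iter_adm hUo hM hSF hf n) c d y

end Iterates


lemma psi_sq (hM : IsMarkovOperator Φ) (h : C(K, ℂ)) (hfix : psiFun U Φ ⇑h = ⇑h) :
    ∀ y, ((‖h y‖ ^ 2 : ℝ) : ℂ) ≤ psiFun U Φ (fun z => ((‖h z‖ ^ 2 : ℝ) : ℂ)) y := by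
  intro y
  by_cases hy : y ∈ U
  · obtain ⟨P, hPP, hrep⟩ := exists_repr hM hy
    obtain ⟨C, hC⟩ := isCompact_univ.exists_bound_of_continuousOn
      (h.continuous.continuousOn (s := Set.univ))
    have hadm₀ : Adm (fun z : K => ((‖h z‖ ^ 2 : ℝ) : ℂ)) := by
      refine ⟨(Complex.continuous_ofReal.comp ((map_continuous h).norm.pow 2)).measurable,
        C ^ 2, fun z => ?_⟩
      have h1 : ‖h z‖ ^ 2 ≤ C ^ 2 :=
        pow_le_pow_left₀ (norm_nonneg _) (hC z (Set.mem_univ z)) 2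
      simpa [Complex.norm_real, abs_of_nonneg (sq_nonneg ‖h z‖)] using h1
    rw [hrep _ hadm₀]
    have hcx : ∫ v : ↥U, h v.1 ∂P = h y := by
      have hadmh : Adm (⇑h) := ⟨h.continuous.measurable, C, fun z => hC z (Set.mem_univ z)⟩
      rw [← hrep _ hadmh]
      exact congrFun hfix y
    have hcs : ‖h y‖ ^ 2 ≤ ∫ v : ↥U, ‖h v.1‖ ^ 2 ∂P :=
      cs_step P (fun v : ↥U => h v.1) (h.continuous.measurable.comp measurable_subtype_coe)
        (fun v => hC v.1 (Set.mem_univ _)) hcx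
    have hre : ∫ v : ↥U, ((‖h v.1‖ ^ 2 : ℝ) : ℂ) ∂P = ((∫ v : ↥U, ‖h v.1‖ ^ 2 ∂P : ℝ) : ℂ) :=
      integral_ofReal
    rw [hre]
    exact Complex.real_le_real.2 hcs
  · rw [psi_not_mem hy]

end Stmt14

open Stmt14 in
/-- If there is a point `z₀ ∈ U` at which `π(|h|²) − |h|²`
vanishes for every `h` fixed by `Ψ`, then `π(|h|²) = |h|²` identically on
`K` for every such `h`. -/
theorem stmt14 {K : Type*} [MetricSpace K] [CompactSpace K]
    [MeasurableSpace K] [BorelSpace K]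
    (U : Set K) (hUopen : IsOpen U) (hUdense : Dense U)
    (hbd : ∃ a b : K, a ∈ Uᶜ ∧ b ∈ Uᶜ ∧ a ≠ b)
    (Φ : (↥U → ℂ) → (↥U → ℂ))
    (hM : IsMarkovOperator Φ) (hSF : HasStrongFeller Φ)
    (hA : CondA U Φ) (hB : CondB U Φ)
    (hz : ∃ z₀ ∈ U, ∀ (h : C(K, ℂ)) (p : K → ℂ), psiFun U Φ ⇑h = ⇑h →
      TendstoUniformly
        (fun n x => (psiFun U Φ)^[n] (fun y => ((‖h y‖ ^ 2 : ℝ) : ℂ)) x)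
        p atTop →
      p z₀ - ((‖h z₀‖ ^ 2 : ℝ) : ℂ) = 0) :
    ∀ (h : C(K, ℂ)) (p : K → ℂ), psiFun U Φ ⇑h = ⇑h →
      TendstoUniformly
        (fun n x => (psiFun U Φ)^[n] (fun y => ((‖h y‖ ^ 2 : ℝ) : ℂ)) x)
        p atTop →
      ∀ x : K, p x = ((‖h x‖ ^ 2 : ℝ) : ℂ) := by
  classical
  obtain ⟨z₀, hz₀U, hz₀⟩ := hz
  intro h p hfix hunif
  set f₀ : K → ℂ := fun y => ((‖h y‖ ^ 2 : ℝ) : ℂ) with hf₀def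
  set F : ℕ → K → ℂ := fun n => (psiFun U Φ)^[n] f₀ with hFdef
  have hcont₀ : Continuous f₀ :=
    Complex.continuous_ofReal.comp ((map_continuous h).norm.pow 2)
  obtain ⟨C₀, hC₀⟩ := isCompact_univ.exists_bound_of_continuousOn hcont₀.continuousOn
  have hadm₀ : Adm f₀ := ⟨hcont₀.measurable, C₀, fun z => hC₀ z (Set.mem_univ z)⟩
  have hFadm : ∀ n, Adm (F n) := iter_adm hUopen hM hSF hadm₀
  have him₀ : ∀ y, (f₀ y).im = 0 := fun y => Complex.ofReal_im _
  have hFim : ∀ n y, (F n y).im = 0 := iter_im hUopen hM hSF hadm₀ him₀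
  have hstep : ∀ y, f₀ y ≤ psiFun U Φ f₀ y := psi_sq hM h hfix
  have hflow : ∀ n y, f₀ y ≤ F n y := iter_superfix hUopen hM hSF hadm₀ hstep
  have hpt : ∀ y, Tendsto (fun n => F n y) atTop (𝓝 (p y)) := fun y => hunif.tendsto_at y
  have pim : ∀ y, (p y).im = 0 := by
    intro y
    have h1 : Tendsto (fun n => (F n y).im) atTop (𝓝 (p y).im) :=
      (Complex.continuous_im.tendsto _).comp (hpt y)
    have h2 : (fun n => (F n y).im) = fun _ => (0 : ℝ) := funext fun n => hFim n y
    rw [h2] at h1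
    exact tendsto_nhds_unique h1 tendsto_const_nhds
  have pre_ge : ∀ y, (f₀ y).re ≤ (p y).re := fun y =>
    ge_of_tendsto ((Complex.continuous_re.tendsto (p y)).comp (hpt y))
      (Filter.Eventually.of_forall fun n => (Complex.le_def.1 (hflow n y)).1)
  have ple : ∀ y, f₀ y ≤ p y := fun y =>
    Complex.le_def.2 ⟨pre_ge y, by rw [him₀, pim]⟩
  have hpbd : ∀ y ∉ U, p y = f₀ y := by
    intro y hy
    have h1 : (fun n => F n y) = fun _ => f₀ y := funext fun n => iter_boundary hy n
    have h2 := hpt y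
    rw [h1] at h2
    exact tendsto_nhds_unique h2 tendsto_const_nhds
  -- continuity of p on U
  have contU : ContinuousOn p U := by
    refine (hunif.tendstoUniformlyOn (s := U)).continuousOn
      (Filter.Eventually.of_forall fun n => ?_).frequently
    match n with
    | 0 => exact hcont₀.continuousOn
    | Nat.succ n =>
      have heq : (psiFun U Φ)^[n + 1] f₀ = psiFun U Φ (F n) :=
        Function.iterate_succ_apply' _ _ _
      show ContinuousOn ((psiFun U Φ)^[n+1] f₀) U
      rw [heq]
      exact psi_continuousOn hSF (hFadm n)
  -- continuity of p at boundary points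
  have contB : ∀ x ∉ U, ContinuousAt p x := by
    intro x hx
    have hpx : (p x).re = ‖h x‖ ^ 2 := by
      rw [hpbd x hx]; exact Complex.ofReal_re _
    rw [ContinuousAt, Metric.tendsto_nhds]
    intro ε hε
    have hε3 : 0 < ε / 3 := by linarith
    obtain ⟨b, hbx, hbneg, hbineq⟩ := hA x hx
    have Bim : ∀ y, (b y).im = 0 := by
      intro y
      by_cases hyx : y = x
      · rw [hyx, hbx]; rfl
      · have := (Complex.lt_def.1 (hbneg y hyx)).2
        simpa using this
    have brecont : Continuous fun y => (b y).re :=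
      Complex.continuous_re.comp b.continuous
    have brex : (b x).re = 0 := by rw [hbx]; rfl
    have breneg : ∀ y, y ≠ x → (b y).re < 0 := by
      intro y hyx
      have := (Complex.lt_def.1 (hbneg y hyx)).1
      simpa using this
    obtain ⟨Cb, hCb⟩ := isCompact_univ.exists_bound_of_continuousOn b.continuous.continuousOn
    have hBadm : Adm ⇑b := ⟨b.continuous.measurable, Cb, fun z => hCb z (Set.mem_univ z)⟩
    have hBstep : ∀ y, b y ≤ psiFun U Φ ⇑b y := by
      intro y
      by_cases hy : y ∈ U
      · rw [psi_mem hy]; exact hbineq ⟨y, hy⟩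
      · rw [psi_not_mem hy]
    have hBiter : ∀ n y, b y ≤ (psiFun U Φ)^[n] ⇑b y :=
      iter_superfix hUopen hM hSF hBadm hBstep
    have hBimiter : ∀ n y, ((psiFun U Φ)^[n] ⇑b y).im = 0 :=
      iter_im hUopen hM hSF hBadm Bim
    obtain ⟨C, hC0, hCbd⟩ := exists_barrier_const
      (g := fun y : K => ‖h y‖ ^ 2) ((map_continuous h).norm.pow 2) brecont
      brex breneg hε3
    set a : ℝ := ‖h x‖ ^ 2 + ε / 3 with hadef
    set Q : K → ℂ := fun z => ((a : ℝ) : ℂ) - (C : ℂ) * b z with hQdef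
    have hQre : ∀ z, (Q z).re = a - C * (b z).re := by
      intro z
      simp [hQdef, Complex.sub_re, Complex.mul_re, Complex.ofReal_re,
        Complex.ofReal_im, Bim z]
    have hQim : ∀ z, (Q z).im = 0 := by
      intro z
      simp [hQdef, Complex.sub_im, Complex.mul_im, Complex.ofReal_im,
        Complex.ofReal_re, Bim z]
    have hf₀re : ∀ z, (f₀ z).re = ‖h z‖ ^ 2 := fun z => Complex.ofReal_re _
    have hQadm : Adm Q := by
      refine ⟨measurable_const.sub (measurable_const.mul b.continuous.measurable),
        ‖((a : ℝ) : ℂ)‖ + C * Cb, fun z => ?_⟩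
      have h9 : ‖(C : ℂ) * b z‖ = C * ‖b z‖ := by
        rw [norm_mul, Complex.norm_real, Real.norm_eq_abs, abs_of_nonneg hC0]
      calc ‖Q z‖ ≤ ‖((a : ℝ) : ℂ)‖ + ‖(C : ℂ) * b z‖ := norm_sub_le _ _
        _ ≤ ‖((a : ℝ) : ℂ)‖ + C * Cb := by
            have := mul_le_mul_of_nonneg_left (hCb z (Set.mem_univ z)) hC0
            rw [h9]
            linarith
    have hf₀Q : ∀ y, f₀ y ≤ Q y := by
      intro y
      rw [Complex.le_def]
      constructor
      · rw [hQre y, hf₀re y]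
        have h1 := hCbd y
        linarith
      · rw [him₀ y, hQim y]
    have hQiter : ∀ n y, (psiFun U Φ)^[n] Q y
        = ((a : ℝ) : ℂ) - (C : ℂ) * (psiFun U Φ)^[n] ⇑b y :=
      iter_affine hUopen hM hSF hBadm _ _
    have hQle : ∀ n y, (psiFun U Φ)^[n] Q y ≤ Q y := by
      intro n y
      rw [hQiter n y, Complex.le_def, hQre y, hQim y]
      constructor
      · simp only [Complex.sub_re, Complex.ofReal_re, Complex.mul_re, Complex.ofReal_im,
          hBimiter n y, mul_zero, zero_mul, sub_zero]
        have h1 : (b y).re ≤ ((psiFun U Φ)^[n] ⇑b y).re := (Complex.le_def.1 (hBiter n y)).1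
        have := mul_le_mul_of_nonneg_left h1 hC0
        linarith
      · simp [Complex.sub_im, Complex.mul_im, Complex.ofReal_im, Complex.ofReal_re,
          hBimiter n y]
    have hFQ : ∀ n y, F n y ≤ Q y := fun n y =>
      le_trans (iter_mono hUopen hM hSF hadm₀ hQadm hf₀Q n y) (hQle n y)
    have hpQ : ∀ y, (p y).re ≤ (Q y).re := fun y =>
      le_of_tendsto ((Complex.continuous_re.tendsto (p y)).comp (hpt y))
        (Filter.Eventually.of_forall fun n => (Complex.le_def.1 (hFQ n y)).1)
    -- eventual bounds near x
    have hC1 : (0:ℝ) < C + 1 := by linarith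
    have e1 : ∀ᶠ y in 𝓝 x, -(ε / 3) / (C + 1) < (b y).re := by
      refine (brecont.tendsto x).eventually (eventually_gt_nhds ?_)
      rw [brex]
      exact div_neg_of_neg_of_pos (by linarith) hC1
    have e2 : ∀ᶠ y in 𝓝 x, ‖h x‖ ^ 2 - ε / 3 < ‖h y‖ ^ 2 := by
      refine (((map_continuous h).norm.pow 2).tendsto x).eventually
        (eventually_gt_nhds ?_)
      show ‖h x‖ ^ 2 - ε / 3 < ‖h x‖ ^ 2
      linarith
    filter_upwards [e1, e2] with y h1 h2
    have hupper : (p y).re ≤ ‖h x‖ ^ 2 + ε / 3 - C * (b y).re := by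
      have h3 := hpQ y
      rw [hQre y, hadef] at h3
      linarith
    have k1 : -((b y).re) ≤ (ε / 3) / (C + 1) := by
      rw [neg_div] at h1
      linarith
    have k2 : C * (-((b y).re)) ≤ C * ((ε / 3) / (C + 1)) :=
      mul_le_mul_of_nonneg_left k1 hC0
    have k3 : C * ((ε / 3) / (C + 1)) ≤ ε / 3 := by
      have h9 : C / (C + 1) ≤ 1 := by
        rw [div_le_one hC1]; linarith
      have h10 : C * ((ε / 3) / (C + 1)) = (ε / 3) * (C / (C + 1)) := by ring
      rw [h10]
      calc (ε / 3) * (C / (C + 1)) ≤ (ε / 3) * 1 :=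
            mul_le_mul_of_nonneg_left h9 (le_of_lt hε3)
        _ = ε / 3 := mul_one _
    have hlower : ‖h x‖ ^ 2 - ε / 3 < (p y).re := by
      have h3 := pre_ge y
      rw [hf₀re y] at h3
      linarith
    have hdist : dist (p y) (p x) = |(p y).re - (p x).re| := by
      have him : p y - p x = (((p y).re - (p x).re : ℝ) : ℂ) := by
        apply Complex.ext <;> simp [pim]
      rw [Complex.dist_eq, him, Complex.norm_real, Real.norm_eq_abs]
    rw [hdist, hpx, abs_lt]
    constructor <;> linarith
  have pcont : Continuous p := by
    rw [continuous_iff_continuousAt]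
    intro x
    by_cases hx : x ∈ U
    · exact contU.continuousAt (hUopen.mem_nhds hx)
    · exact contB x hx
  obtain ⟨Cp, hCp⟩ := isCompact_univ.exists_bound_of_continuousOn pcont.continuousOn
  have hpadm : Adm p := ⟨pcont.measurable, Cp, fun z => hCp z (Set.mem_univ z)⟩
  -- p is psi-invariant
  have hψp : ∀ y, psiFun U Φ p y = p y := by
    intro y
    by_cases hy : y ∈ U
    · obtain ⟨P, hPP, hrep⟩ := exists_repr hM hy
      have hlim1 : Tendsto (fun n => ∫ v : ↥U, F n v.1 ∂P) atTop
          (𝓝 (∫ v : ↥U, p v.1 ∂P)) := by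
        rw [Metric.tendsto_nhds]
        intro δ hδ
        have := Metric.tendstoUniformly_iff.1 hunif (δ / 2) (half_pos hδ)
        filter_upwards [this] with n hn
        have hsub : ∫ v : ↥U, F n v.1 ∂P - ∫ v : ↥U, p v.1 ∂P
            = ∫ v : ↥U, (F n v.1 - p v.1) ∂P :=
          (integral_sub ((hFadm n).integrable P) (hpadm.integrable P)).symm
        rw [dist_eq_norm, hsub]
        calc ‖∫ v : ↥U, (F n v.1 - p v.1) ∂P‖ ≤ (δ / 2) * (P Set.univ).toReal := by
              refine norm_integral_le_of_norm_le_const (ae_of_all _ fun v => ?_)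
              have := hn v.1
              rw [dist_comm, dist_eq_norm] at this
              exact this.le
          _ = δ / 2 := by simp
          _ < δ := by linarith
      have heval : (fun n => ∫ v : ↥U, F n v.1 ∂P) = fun n => F (n + 1) y := by
        funext n
        rw [← hrep _ (hFadm n)]
        show psiFun U Φ ((psiFun U Φ)^[n] f₀) y = (psiFun U Φ)^[n+1] f₀ y
        rw [Function.iterate_succ_apply']
      rw [heval] at hlim1
      have hlim2 : Tendsto (fun n => F (n + 1) y) atTop (𝓝 (p y)) :=
        (hpt y).comp (tendsto_add_atTop_nat 1)
      rw [hrep p hpadm]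
      exact tendsto_nhds_unique hlim1 hlim2
    · rw [psi_not_mem hy]
  -- apply condition B to G = f₀ - p
  set G : C(K, ℂ) := ⟨fun y => f₀ y - p y, hcont₀.sub pcont⟩ with hGdef
  have hGim : ∀ y, (G y).im = 0 := by
    intro y
    show (f₀ y - p y).im = 0
    rw [Complex.sub_im, him₀, pim, sub_zero]
  have hGineq : ∀ u : ↥U, G u.1 ≤ Φ (fun v : ↥U => G v.1) u := by
    intro u
    have hcalc : psiFun U Φ (fun z => f₀ z - p z) u.1
        = psiFun U Φ f₀ u.1 - psiFun U Φ p u.1 := psi_sub hM hadm₀ hpadm u.1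
    have h1 : G u.1 ≤ psiFun U Φ (fun z => f₀ z - p z) u.1 := by
      rw [hcalc, hψp u.1]
      exact sub_le_sub_right (hstep u.1) _
    have h2 : psiFun U Φ (fun z => f₀ z - p z) u.1 = Φ (fun v : ↥U => G v.1) u :=
      psi_mem u.2
    rw [← h2]
    exact h1
  have hGmax : ∃ z ∈ U, ∀ x : K, G x ≤ G z := by
    refine ⟨z₀, hz₀U, fun x => ?_⟩
    have hpz : p z₀ = f₀ z₀ := by
      have := hz₀ h p hfix hunif
      exact sub_eq_zero.1 this
    have hGz : G z₀ = 0 := by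
      show f₀ z₀ - p z₀ = 0
      rw [hpz, sub_self]
    rw [hGz]
    show f₀ x - p x ≤ 0
    rw [Complex.le_def]
    constructor
    · simp only [Complex.sub_re, Complex.zero_re]
      linarith [pre_ge x]
    · rw [Complex.sub_im, him₀, pim, sub_zero]; rfl
  have hconst := hB G hGim hGineq hGmax
  intro x
  have h1 : G x = G z₀ := hconst x z₀
  have hpz : p z₀ = f₀ z₀ := sub_eq_zero.1 (hz₀ h p hfix hunif)
  have h2 : G z₀ = 0 := by show f₀ z₀ - p z₀ = 0; rw [hpz, sub_self]
  have h3 : f₀ x - p x = 0 := by rw [show f₀ x - p x = G x from rfl, h1, h2]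
  have := sub_eq_zero.1 h3
  exact this.symm
end

section
/- Let Fix(Ψ) = {h ∈ C(K) : Ψ(h) = h} and L = {π(|h|²) − |h|² : h ∈ Fix(Ψ)}. Then ∂U = {x ∈ K : g(x) = 0 for every g ∈ L}; in particular there is no point z₀ ∈ U with g(z₀) = 0 for all g ∈ L. -/
open MeasureTheory Filter Topology ComplexOrder

set_option linter.unusedSectionVars false

section Dev

variable {K : Type*} [MetricSpace K] [CompactSpace K]
    [MeasurableSpace K] [BorelSpace K]
    {U : Set K} {Φ : (↥U → ℂ) → (↥U → ℂ)}

/-- bound for a continuous real function on a compact space -/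
lemma cont_bound (f : K → ℝ) (hf : Continuous f) : ∃ C : ℝ, ∀ y, |f y| ≤ C := by
  rcases isEmpty_or_nonempty K with h | h
  · exact ⟨0, fun y => (IsEmpty.false y).elim⟩
  · obtain ⟨z, -, hz⟩ := isCompact_univ.exists_isMaxOn Set.univ_nonempty
      ((continuous_abs.comp hf).continuousOn)
    exact ⟨|f z|, fun y => hz (Set.mem_univ y)⟩

noncomputable def Pm (hM : IsMarkovOperator Φ) (x : ↥U) : Measure ↥U := (hM x).choose

instance Pm_prob (hM : IsMarkovOperator Φ) (x : ↥U) : IsProbabilityMeasure (Pm hM x) :=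
  (hM x).choose_spec.1

lemma Pm_rep (hM : IsMarkovOperator Φ) (x : ↥U) (f : ↥U → ℂ) (hf : Measurable f)
    (hb : ∃ C : ℝ, ∀ y, ‖f y‖ ≤ C) : Φ f x = ∫ y, f y ∂(Pm hM x) :=
  (hM x).choose_spec.2 f hf hb

lemma integrable_of_bdd {μ : Measure ↥U} [IsProbabilityMeasure μ] {f : K → ℝ}
    (hf : Measurable f) {C : ℝ} (hC : ∀ y, |f y| ≤ C) :
    Integrable (fun y : ↥U => f y.1) μ := by
  refine Integrable.mono' (integrable_const C)
    ((hf.comp measurable_subtype_coe).aestronglyMeasurable) ?_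
  exact ae_of_all _ fun y => by simpa [Real.norm_eq_abs] using hC y.1

/-- the real Markov-type operator induced by `Φ`'s representing measures -/
noncomputable def TR (hM : IsMarkovOperator Φ) (f : K → ℝ) : K → ℝ :=
  open Classical in
  fun x => if hx : x ∈ U then ∫ y, f y.1 ∂(Pm hM ⟨x, hx⟩) else f x

lemma TR_of_mem (hM : IsMarkovOperator Φ) (f : K → ℝ) {x : K} (hx : x ∈ U) :
    TR hM f x = ∫ y, f y.1 ∂(Pm hM ⟨x, hx⟩) := dif_pos hx

lemma TR_of_not_mem (hM : IsMarkovOperator Φ) (f : K → ℝ) {x : K} (hx : x ∉ U) :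
    TR hM f x = f x := dif_neg hx

lemma psi_coe (hM : IsMarkovOperator Φ) (f : K → ℝ) (hf : Measurable f)
    {C : ℝ} (hC : ∀ y, |f y| ≤ C) :
    psiFun U Φ (fun z => (f z : ℂ)) = fun z => ((TR hM f z : ℝ) : ℂ) := by
  funext x
  by_cases hx : x ∈ U
  · have hrep := Pm_rep hM ⟨x, hx⟩ (fun v : ↥U => ((f v.1 : ℝ) : ℂ))
      (by exact Complex.measurable_ofReal.comp (hf.comp measurable_subtype_coe))
      ⟨C, fun y => by simpa [Complex.norm_real, Real.norm_eq_abs] using hC y.1⟩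
    rw [show psiFun U Φ (fun z => (f z : ℂ)) x
        = Φ (fun v : ↥U => ((f v.1 : ℝ) : ℂ)) ⟨x, hx⟩ from dif_pos hx,
      hrep, TR_of_mem hM f hx]
    exact integral_ofReal
  · rw [show psiFun U Φ (fun z => (f z : ℂ)) x = ((f x : ℝ) : ℂ) from dif_neg hx,
      TR_of_not_mem hM f hx]

lemma TR_mono (hM : IsMarkovOperator Φ) {f g : K → ℝ}
    (hfm : Measurable f) {Cf : ℝ} (hfb : ∀ y, |f y| ≤ Cf)
    (hgm : Measurable g) {Cg : ℝ} (hgb : ∀ y, |g y| ≤ Cg)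
    (hfg : ∀ y, f y ≤ g y) : ∀ x, TR hM f x ≤ TR hM g x := by
  intro x
  by_cases hx : x ∈ U
  · rw [TR_of_mem hM f hx, TR_of_mem hM g hx]
    exact integral_mono (integrable_of_bdd hfm hfb) (integrable_of_bdd hgm hgb)
      fun y => hfg y.1
  · rw [TR_of_not_mem hM f hx, TR_of_not_mem hM g hx]; exact hfg x

lemma TR_bound (hM : IsMarkovOperator Φ) {f : K → ℝ}
    (hfm : Measurable f) {C : ℝ} (hfb : ∀ y, |f y| ≤ C) :
    ∀ x, |TR hM f x| ≤ C := by
  intro x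
  by_cases hx : x ∈ U
  · rw [TR_of_mem hM f hx]
    have := norm_integral_le_of_norm_le_const
      (μ := Pm hM ⟨x, hx⟩) (f := fun y : ↥U => f y.1) (C := C)
      (ae_of_all _ fun y => by simpa [Real.norm_eq_abs] using hfb y.1)
    simpa [Real.norm_eq_abs, measure_univ] using this
  · rw [TR_of_not_mem hM f hx]; exact hfb x

lemma TR_affine (hM : IsMarkovOperator Φ) (A c : ℝ) {f : K → ℝ}
    (hfm : Measurable f) {C : ℝ} (hfb : ∀ y, |f y| ≤ C) :
    ∀ x, TR hM (fun y => A + c * f y) x = A + c * TR hM f x := by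
  intro x
  by_cases hx : x ∈ U
  · rw [TR_of_mem hM _ hx, TR_of_mem hM f hx]
    rw [integral_add (integrable_const A) ((integrable_of_bdd hfm hfb).const_mul c),
      integral_const, integral_const_mul]
    simp [measure_univ]
  · rw [TR_of_not_mem hM _ hx, TR_of_not_mem hM f hx]

lemma TR_sub (hM : IsMarkovOperator Φ) {f g : K → ℝ}
    (hfm : Measurable f) {Cf : ℝ} (hfb : ∀ y, |f y| ≤ Cf)
    (hgm : Measurable g) {Cg : ℝ} (hgb : ∀ y, |g y| ≤ Cg) :
    ∀ x, TR hM (fun y => f y - g y) x = TR hM f x - TR hM g x := by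
  intro x
  by_cases hx : x ∈ U
  · rw [TR_of_mem hM _ hx, TR_of_mem hM f hx, TR_of_mem hM g hx]
    exact integral_sub (integrable_of_bdd hfm hfb) (integrable_of_bdd hgm hgb)
  · rw [TR_of_not_mem hM _ hx, TR_of_not_mem hM f hx, TR_of_not_mem hM g hx]

lemma TR_const (hM : IsMarkovOperator Φ) (c : ℝ) : ∀ x : K, TR hM (fun _ => c) x = c := by
  intro x
  by_cases hx : x ∈ U
  · rw [TR_of_mem hM _ hx, integral_const]; simp [measure_univ]
  · exact TR_of_not_mem hM _ hx

lemma TR_restrict_eq (hM : IsMarkovOperator Φ) {f : K → ℝ}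
    (hfm : Measurable f) {C : ℝ} (hfb : ∀ y, |f y| ≤ C) :
    ∀ u : ↥U, TR hM f u.1 = (Φ (fun v : ↥U => (f v.1 : ℂ)) u).re := by
  intro u
  have hrep := Pm_rep hM u (fun v : ↥U => ((f v.1 : ℝ) : ℂ))
    (by exact Complex.measurable_ofReal.comp (hfm.comp measurable_subtype_coe))
    ⟨C, fun y => by simpa [Complex.norm_real, Real.norm_eq_abs] using hfb y.1⟩
  rw [hrep, TR_of_mem hM f u.2]
  rw [show (⟨u.1, u.2⟩ : ↥U) = u from rfl]
  have hior : (∫ y : ↥U, ((f y.1 : ℝ) : ℂ) ∂(Pm hM u))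
      = ((∫ y : ↥U, f y.1 ∂(Pm hM u) : ℝ) : ℂ) := integral_ofReal
  rw [hior]
  simp

lemma TR_continuousAt (hM : IsMarkovOperator Φ) (hSF : HasStrongFeller Φ)
    (hUopen : IsOpen U) {f : K → ℝ}
    (hfm : Measurable f) {C : ℝ} (hfb : ∀ y, |f y| ≤ C) :
    ∀ x ∈ U, ContinuousAt (TR hM f) x := by
  have hrest : Continuous (fun u : ↥U => TR hM f u.1) := by
    have : (fun u : ↥U => TR hM f u.1)
        = fun u : ↥U => (Φ (fun v : ↥U => (f v.1 : ℂ)) u).re := by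
      funext u; exact TR_restrict_eq hM hfm hfb u
    rw [this]
    exact Complex.continuous_re.comp (hSF _
      (Complex.measurable_ofReal.comp (hfm.comp measurable_subtype_coe))
      ⟨C, fun y => by simpa [Complex.norm_real, Real.norm_eq_abs] using hfb y.1⟩)
  intro x hx
  have hcont : ContinuousOn (TR hM f) U := continuousOn_iff_continuous_restrict.2 hrest
  exact hcont.continuousAt (hUopen.mem_nhds hx)

lemma TR_measurable (hM : IsMarkovOperator Φ) (hSF : HasStrongFeller Φ)
    (hUopen : IsOpen U) {f : K → ℝ}
    (hfm : Measurable f) {C : ℝ} (hfb : ∀ y, |f y| ≤ C) :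
    Measurable (TR hM f) := by
  apply measurable_of_restrict_of_restrict_compl hUopen.measurableSet
  · have : Continuous (fun u : ↥U => TR hM f u.1) := by
      have heq : (fun u : ↥U => TR hM f u.1)
          = fun u : ↥U => (Φ (fun v : ↥U => (f v.1 : ℂ)) u).re := by
        funext u; exact TR_restrict_eq hM hfm hfb u
      rw [heq]
      exact Complex.continuous_re.comp (hSF _
        (Complex.measurable_ofReal.comp (hfm.comp measurable_subtype_coe))
        ⟨C, fun y => by simpa [Complex.norm_real, Real.norm_eq_abs] using hfb y.1⟩)
    exact this.measurable
  · have : (Uᶜ).restrict (TR hM f) = fun v : ↥(Uᶜ) => f v.1 := by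
      funext v; exact TR_of_not_mem hM f v.2
    change Measurable ((Uᶜ).restrict (TR hM f))
    rw [this]
    exact hfm.comp measurable_subtype_coe

/-! ### Barriers -/

noncomputable def rbar (hA : CondA U Φ) {x : K} (hx : x ∈ Uᶜ) : K → ℝ :=
  fun y => ((hA x hx).choose y).re

lemma rbar_cont (hA : CondA U Φ) {x : K} (hx : x ∈ Uᶜ) : Continuous (rbar hA hx) :=
  Complex.continuous_re.comp (hA x hx).choose.continuous

lemma rbar_self (hA : CondA U Φ) {x : K} (hx : x ∈ Uᶜ) : rbar hA hx x = 0 := by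
  unfold rbar; rw [(hA x hx).choose_spec.1]; rfl

lemma rbar_neg (hA : CondA U Φ) {x : K} (hx : x ∈ Uᶜ) {y : K} (hy : y ≠ x) :
    rbar hA hx y < 0 := by
  have := (hA x hx).choose_spec.2.1 y hy
  rw [Complex.lt_def] at this
  exact this.1

lemma rbar_nonpos (hA : CondA U Φ) {x : K} (hx : x ∈ Uᶜ) (y : K) : rbar hA hx y ≤ 0 := by
  rcases eq_or_ne y x with rfl | hy
  · rw [rbar_self]
  · exact (rbar_neg hA hx hy).le

lemma rbar_coe (hA : CondA U Φ) {x : K} (hx : x ∈ Uᶜ) (y : K) :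
    (hA x hx).choose y = ((rbar hA hx y : ℝ) : ℂ) := by
  rcases eq_or_ne y x with h | hy
  · subst h; rw [(hA y hx).choose_spec.1, rbar_self]; simp
  · have := (hA x hx).choose_spec.2.1 y hy
    rw [Complex.lt_def] at this
    apply Complex.ext
    · simp [rbar]
    · simpa using this.2

lemma rbar_subinv (hM : IsMarkovOperator Φ) (hA : CondA U Φ) {x : K} (hx : x ∈ Uᶜ) :
    ∀ y, rbar hA hx y ≤ TR hM (rbar hA hx) y := by
  intro y
  by_cases hy : y ∈ U
  · obtain ⟨C, hC⟩ := cont_bound _ (rbar_cont hA hx)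
    have hle := (hA x hx).choose_spec.2.2 ⟨y, hy⟩
    have hfn : (fun v : ↥U => (hA x hx).choose v.1)
        = fun v : ↥U => ((rbar hA hx v.1 : ℝ) : ℂ) := funext fun v => rbar_coe hA hx v.1
    rw [hfn] at hle
    have hrest := TR_restrict_eq hM (rbar_cont hA hx).measurable hC (⟨y, hy⟩ : ↥U)
    rw [Complex.le_def] at hle
    have h1 := hle.1
    rw [rbar_coe hA hx] at h1
    simpa [hrest] using h1
  · rw [TR_of_not_mem hM _ hy]

/-! ### Iterates -/

lemma iter_meas_bdd (hM : IsMarkovOperator Φ) (hSF : HasStrongFeller Φ)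
    (hUopen : IsOpen U) {f : K → ℝ} (hfm : Measurable f) {C : ℝ}
    (hfb : ∀ y, |f y| ≤ C) :
    ∀ n, Measurable ((TR hM)^[n] f) ∧ ∀ y, |(TR hM)^[n] f y| ≤ C := by
  intro n
  induction n with
  | zero => exact ⟨hfm, hfb⟩
  | succ m ih =>
    rw [Function.iterate_succ_apply']
    exact ⟨TR_measurable hM hSF hUopen ih.1 ih.2, TR_bound hM ih.1 ih.2⟩

lemma iter_le_superinv (hM : IsMarkovOperator Φ) (hSF : HasStrongFeller Φ)
    (hUopen : IsOpen U) {f w : K → ℝ} (hfm : Measurable f) {Cf : ℝ}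
    (hfb : ∀ y, |f y| ≤ Cf) (hwm : Measurable w) {Cw : ℝ} (hwb : ∀ y, |w y| ≤ Cw)
    (hfw : ∀ y, f y ≤ w y) (hw : ∀ y, TR hM w y ≤ w y) :
    ∀ n y, (TR hM)^[n] f y ≤ w y := by
  intro n
  induction n with
  | zero => exact hfw
  | succ m ih =>
    intro y
    rw [Function.iterate_succ_apply']
    calc TR hM ((TR hM)^[m] f) y
        ≤ TR hM w y := TR_mono hM (iter_meas_bdd hM hSF hUopen hfm hfb m).1
          (iter_meas_bdd hM hSF hUopen hfm hfb m).2 hwm hwb ih y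
      _ ≤ w y := hw y

lemma iter_ge_subinv (hM : IsMarkovOperator Φ) (hSF : HasStrongFeller Φ)
    (hUopen : IsOpen U) {f w : K → ℝ} (hfm : Measurable f) {Cf : ℝ}
    (hfb : ∀ y, |f y| ≤ Cf) (hwm : Measurable w) {Cw : ℝ} (hwb : ∀ y, |w y| ≤ Cw)
    (hfw : ∀ y, w y ≤ f y) (hw : ∀ y, w y ≤ TR hM w y) :
    ∀ n y, w y ≤ (TR hM)^[n] f y := by
  intro n
  induction n with
  | zero => exact hfw
  | succ m ih =>
    intro y
    rw [Function.iterate_succ_apply']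
    calc w y ≤ TR hM w y := hw y
      _ ≤ TR hM ((TR hM)^[m] f) y := TR_mono hM hwm hwb
          (iter_meas_bdd hM hSF hUopen hfm hfb m).1
          (iter_meas_bdd hM hSF hUopen hfm hfb m).2 ih y

lemma exists_barrier_const_s16 (hA : CondA U Φ) {x : K} (hx : x ∈ Uᶜ) {f : K → ℝ}
    (hf : Continuous f) {ε : ℝ} (hε : 0 < ε) :
    ∃ c : ℝ, 0 ≤ c ∧ ∀ y, f y ≤ f x + ε - c * rbar hA hx y := by
  obtain ⟨B, hB⟩ := cont_bound f hf
  set V : Set K := f ⁻¹' Set.Iio (f x + ε) with hV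
  have hVopen : IsOpen V := (isOpen_Iio).preimage hf
  have hxV : x ∈ V := by simp [hV, hε]
  by_cases hne : (Vᶜ).Nonempty
  · obtain ⟨z, hz, hzmax⟩ := (hVopen.isClosed_compl.isCompact).exists_isMaxOn hne
      ((rbar_cont hA hx).continuousOn)
    have hzx : z ≠ x := fun h => hz (h ▸ hxV)
    set δ : ℝ := -(rbar hA hx z) with hδ
    have hδpos : 0 < δ := by simp [hδ]; exact rbar_neg hA hx hzx
    refine ⟨max 0 (2 * B / δ), le_max_left _ _, fun y => ?_⟩
    set c := max 0 (2 * B / δ)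
    by_cases hy : y ∈ V
    · have h1 : f y < f x + ε := hy
      have h2 : 0 ≤ -(c * rbar hA hx y) := by
        have := rbar_nonpos hA hx y
        nlinarith [le_max_left 0 (2 * B / δ)]
      linarith
    · have h0 : rbar hA hx y ≤ rbar hA hx z := hzmax hy
      have h1 : rbar hA hx y ≤ -δ := by rw [hδ]; linarith
      have h2 : 2 * B / δ ≤ c := le_max_right _ _
      have h3 : c * δ ≥ 2 * B := by
        rw [ge_iff_le, ← div_le_iff₀ hδpos] at *
        exact h2
      have h4 : -(c * rbar hA hx y) ≥ c * δ := by nlinarith [le_max_left 0 (2 * B / δ)]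
      have h5 : |f y| ≤ B := hB y
      have h6 : |f x| ≤ B := hB x
      rw [abs_le] at h5 h6
      linarith
  · refine ⟨0, le_rfl, fun y => ?_⟩
    have : y ∈ V := by
      by_contra h
      exact hne ⟨y, h⟩
    have : f y < f x + ε := this
    linarith

lemma barrier_superinv (hM : IsMarkovOperator Φ) (hA : CondA U Φ) {x : K}
    (hx : x ∈ Uᶜ) {c : ℝ} (hc : 0 ≤ c) (A : ℝ) :
    ∀ y, TR hM (fun z => A - c * rbar hA hx z) y ≤ A - c * rbar hA hx y := by
  intro y
  obtain ⟨C, hC⟩ := cont_bound _ (rbar_cont hA hx)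
  have heq : (fun z => A - c * rbar hA hx z) = fun z => A + (-c) * rbar hA hx z := by
    funext z; ring
  rw [heq, TR_affine hM A (-c) (rbar_cont hA hx).measurable hC y]
  have := rbar_subinv hM hA hx y
  nlinarith

lemma barrier_subinv (hM : IsMarkovOperator Φ) (hA : CondA U Φ) {x : K}
    (hx : x ∈ Uᶜ) {c : ℝ} (hc : 0 ≤ c) (A : ℝ) :
    ∀ y, A + c * rbar hA hx y ≤ TR hM (fun z => A + c * rbar hA hx z) y := by
  intro y
  obtain ⟨C, hC⟩ := cont_bound _ (rbar_cont hA hx)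
  rw [TR_affine hM A c (rbar_cont hA hx).measurable hC y]
  have := rbar_subinv hM hA hx y
  nlinarith

lemma iter_bounds (hM : IsMarkovOperator Φ) (hSF : HasStrongFeller Φ)
    (hUopen : IsOpen U) (hA : CondA U Φ) {x : K} (hx : x ∈ Uᶜ) {f : K → ℝ}
    (hf : Continuous f) {ε : ℝ} (hε : 0 < ε) :
    ∃ c : ℝ, 0 ≤ c ∧ ∀ n y, f x - ε + c * rbar hA hx y ≤ (TR hM)^[n] f y ∧
      (TR hM)^[n] f y ≤ f x + ε - c * rbar hA hx y := by
  obtain ⟨C, hC⟩ := cont_bound f hf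
  obtain ⟨c₁, hc₁, hb₁⟩ := exists_barrier_const_s16 hA hx hf hε
  obtain ⟨c₂, hc₂, hb₂⟩ := exists_barrier_const_s16 hA hx hf.neg hε
  set c := max c₁ c₂ with hcdef
  have hc : 0 ≤ c := le_trans hc₁ (le_max_left _ _)
  have hwc : Continuous fun z => f x + ε - c * rbar hA hx z :=
    continuous_const.sub (continuous_const.mul (rbar_cont hA hx))
  have hwc' : Continuous fun z => f x - ε + c * rbar hA hx z :=
    continuous_const.add (continuous_const.mul (rbar_cont hA hx))
  obtain ⟨Cw, hCw⟩ := cont_bound _ hwc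
  obtain ⟨Cw', hCw'⟩ := cont_bound _ hwc'
  refine ⟨c, hc, fun n y => ⟨?_, ?_⟩⟩
  · refine iter_ge_subinv hM hSF hUopen hf.measurable hC
      hwc'.measurable hCw'
      (fun z => ?_) (fun z => ?_) n y
    · have := hb₂ z
      have hr := rbar_nonpos hA hx z
      have : -(f z) ≤ -(f x) + ε - c₂ * rbar hA hx z := by simpa using this
      nlinarith [le_max_right c₁ c₂]
    · have heq : (fun w => f x - ε + c * rbar hA hx w)
          = fun w => (f x - ε) + c * rbar hA hx w := by funext w; ring
      have := barrier_subinv hM hA hx hc (f x - ε) z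
      calc f x - ε + c * rbar hA hx z
          ≤ TR hM (fun w => f x - ε + c * rbar hA hx w) z := this
        _ = TR hM (fun w => f x - ε + c * rbar hA hx w) z := rfl
  · refine iter_le_superinv hM hSF hUopen hf.measurable hC
      hwc.measurable hCw
      (fun z => ?_) (fun z => ?_) n y
    · have := hb₁ z
      have hr := rbar_nonpos hA hx z
      nlinarith [le_max_left c₁ c₂]
    · exact barrier_superinv hM hA hx hc (f x + ε) z

/-! ### Continuity at the boundary via barriers -/

lemma cont_at_of_barrier (hA : CondA U Φ) {x : K} (hx : x ∈ Uᶜ) (s : K → ℝ) (A : ℝ)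
    (hsA : s x = A)
    (hb : ∀ ε > (0 : ℝ), ∃ c : ℝ, 0 ≤ c ∧ ∀ y,
      A - ε + c * rbar hA hx y ≤ s y ∧ s y ≤ A + ε - c * rbar hA hx y) :
    ContinuousAt s x := by
  rw [Metric.continuousAt_iff]
  intro ε hε
  obtain ⟨c, hc, hcb⟩ := hb (ε / 3) (by positivity)
  have hrb : ContinuousAt (rbar hA hx) x := (rbar_cont hA hx).continuousAt
  rw [Metric.continuousAt_iff] at hrb
  obtain ⟨δ, hδ, hδb⟩ := hrb ((ε / 3) / (c + 1)) (by positivity)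
  refine ⟨δ, hδ, fun {y} hy => ?_⟩
  have h1 := hδb hy
  rw [Real.dist_eq, rbar_self hA hx, sub_zero] at h1
  have h2 := (hcb y).1
  have h3 := (hcb y).2
  rw [Real.dist_eq, hsA]
  have hry := abs_lt.1 h1
  have hkey : c * |rbar hA hx y| ≤ ε / 3 := by
    have : c * |rbar hA hx y| ≤ c * ((ε / 3) / (c + 1)) :=
      mul_le_mul_of_nonneg_left h1.le hc
    have h4 : c * ((ε / 3) / (c + 1)) ≤ ε / 3 := by
      rw [mul_div_assoc']
      rw [div_le_iff₀ (by linarith : (0:ℝ) < c + 1)]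
      nlinarith
    linarith
  have habs := abs_nonneg (rbar hA hx y)
  have h5 : rbar hA hx y ≤ |rbar hA hx y| := le_abs_self _
  have h6 : -|rbar hA hx y| ≤ rbar hA hx y := neg_abs_le _
  rw [abs_lt]
  constructor
  · nlinarith
  · nlinarith

/-! ### Dini's theorem -/

lemma dini {F : ℕ → K → ℝ} {q : K → ℝ} (hF : ∀ n, Continuous (F n)) (hq : Continuous q)
    (hmono : ∀ n y, F n y ≤ F (n + 1) y)
    (hlim : ∀ y, Tendsto (fun n => F n y) atTop (𝓝 (q y))) :
    TendstoUniformly F q atTop := by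
  have hmonoY : ∀ y, Monotone fun n => F n y :=
    fun y => monotone_nat_of_le_succ fun n => hmono n y
  have hle : ∀ n y, F n y ≤ q y := fun n y => Monotone.ge_of_tendsto (hmonoY y) (hlim y) n
  rw [Metric.tendstoUniformly_iff]
  intro ε hε
  set G : ℕ → Set K := fun n => {y | q y - F n y < ε} with hG
  have hGopen : ∀ n, IsOpen (G n) := fun n => isOpen_lt (hq.sub (hF n)) continuous_const
  have hcover : (Set.univ : Set K) ⊆ ⋃ n, G n := by
    intro y _
    have hev := (hlim y).eventually (eventually_gt_nhds (by linarith : q y - ε < q y))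
    obtain ⟨n, hn⟩ := hev.exists
    exact Set.mem_iUnion.2 ⟨n, by simp [hG]; linarith⟩
  obtain ⟨t, ht⟩ := isCompact_univ.elim_finite_subcover G hGopen hcover
  set N := t.sup id with hN
  have hNbig : ∀ y, q y - F N y < ε := by
    intro y
    obtain ⟨i, hit, hyi⟩ := Set.mem_iUnion₂.1 (ht (Set.mem_univ y))
    have hiN : F i y ≤ F N y := hmonoY y (Finset.le_sup (f := id) hit)
    have : q y - F i y < ε := hyi
    linarith
  filter_upwards [eventually_ge_atTop N] with n hn y
  have h1 : F N y ≤ F n y := hmonoY y hn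
  have h2 := hle n y
  rw [Real.dist_eq, abs_of_nonneg (by linarith : (0:ℝ) ≤ q y - F n y)]
  have := hNbig y
  linarith

lemma TR_cont (hM : IsMarkovOperator Φ) (hSF : HasStrongFeller Φ)
    (hUopen : IsOpen U) (hA : CondA U Φ) {f : K → ℝ} (hf : Continuous f) :
    Continuous (TR hM f) := by
  obtain ⟨C, hC⟩ := cont_bound f hf
  rw [continuous_iff_continuousAt]
  intro x
  by_cases hx : x ∈ U
  · exact TR_continuousAt hM hSF hUopen hf.measurable hC x hx
  · apply cont_at_of_barrier hA hx (TR hM f) (f x) (TR_of_not_mem hM f hx)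
    intro ε hε
    obtain ⟨c, hc, hcb⟩ := iter_bounds hM hSF hUopen hA hx hf hε
    refine ⟨c, hc, fun y => ?_⟩
    have := hcb 1 y
    rwa [Function.iterate_one] at this

/-- the π-limit of the iterates of a subinvariant continuous function -/
lemma pi_limit (hM : IsMarkovOperator Φ) (hSF : HasStrongFeller Φ)
    (hUopen : IsOpen U) (hA : CondA U Φ) {f₀ : K → ℝ} (hf₀ : Continuous f₀)
    (hsub : ∀ y, f₀ y ≤ TR hM f₀ y) :
    ∃ q : K → ℝ, Continuous q ∧ (∀ y, TR hM q y = q y) ∧ (∀ y, f₀ y ≤ q y) ∧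
      (∀ y, y ∉ U → q y = f₀ y) ∧
      TendstoUniformly (fun n y => (TR hM)^[n] f₀ y) q atTop ∧
      (∀ (w : K → ℝ) (Cw : ℝ), Measurable w → (∀ y, |w y| ≤ Cw) →
        (∀ y, f₀ y ≤ w y) → (∀ y, TR hM w y ≤ w y) → ∀ y, q y ≤ w y) := by
  obtain ⟨C, hC⟩ := cont_bound f₀ hf₀
  set F : ℕ → K → ℝ := fun n => (TR hM)^[n] f₀ with hF
  have hmb : ∀ n, Measurable (F n) ∧ ∀ y, |F n y| ≤ C :=
    iter_meas_bdd hM hSF hUopen hf₀.measurable hC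
  have hFc : ∀ n, Continuous (F n) := by
    intro n
    induction n with
    | zero => exact hf₀
    | succ m ih =>
      have : F (m + 1) = TR hM (F m) := Function.iterate_succ_apply' _ _ _
      rw [this]
      exact TR_cont hM hSF hUopen hA ih
  have hmono : ∀ n y, F n y ≤ F (n + 1) y := by
    intro n
    induction n with
    | zero => intro y; simpa [hF] using hsub y
    | succ m ih =>
      intro y
      have e1 : F (m + 2) = TR hM (F (m + 1)) := Function.iterate_succ_apply' _ _ _
      have e2 : F (m + 1) = TR hM (F m) := Function.iterate_succ_apply' _ _ _
      rw [e1]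
      nth_rewrite 1 [e2]
      exact TR_mono hM (hmb m).1 (hmb m).2 (hmb (m + 1)).1 (hmb (m + 1)).2 ih y
  have hmonoY : ∀ y, Monotone fun n => F n y :=
    fun y => monotone_nat_of_le_succ fun n => hmono n y
  have hbdd : ∀ y, BddAbove (Set.range fun n => F n y) := by
    intro y
    refine ⟨C, ?_⟩
    rintro _ ⟨n, rfl⟩
    exact (abs_le.1 ((hmb n).2 y)).2
  set q : K → ℝ := fun y => ⨆ n, F n y with hq
  have hlim : ∀ y, Tendsto (fun n => F n y) atTop (𝓝 (q y)) :=
    fun y => tendsto_atTop_ciSup (hmonoY y) (hbdd y)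
  have hge : ∀ n y, F n y ≤ q y := fun n y => le_ciSup (hbdd y) n
  have hqb : ∀ y, |q y| ≤ C := by
    intro y
    rw [abs_le]
    constructor
    · exact le_trans (abs_le.1 ((hmb 0).2 y)).1 (hge 0 y)
    · exact ciSup_le fun n => (abs_le.1 ((hmb n).2 y)).2
  have hqm : Measurable q :=
    measurable_of_tendsto_metrizable (fun n => (hmb n).1) (tendsto_pi_nhds.2 hlim)
  have hbdvals : ∀ y, y ∉ U → q y = f₀ y := by
    intro y hy
    have hconst : ∀ n, F n y = f₀ y := by
      intro n
      induction n with
      | zero => rfl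
      | succ m ih =>
        have e2 : F (m + 1) = TR hM (F m) := Function.iterate_succ_apply' _ _ _
        rw [e2, TR_of_not_mem hM _ hy]
        exact ih
    have : Tendsto (fun n => F n y) atTop (𝓝 (f₀ y)) := by
      simp only [hconst]; exact tendsto_const_nhds
    exact tendsto_nhds_unique (hlim y) this
  have hfix : ∀ y, TR hM q y = q y := by
    intro y
    by_cases hy : y ∈ U
    · rw [TR_of_mem hM q hy]
      have h1 : Tendsto (fun n => ∫ z, F n z.1 ∂(Pm hM ⟨y, hy⟩)) atTop
          (𝓝 (∫ z, q z.1 ∂(Pm hM ⟨y, hy⟩))) := by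
        refine tendsto_integral_of_dominated_convergence (fun _ => C)
          (fun n => ((hmb n).1.comp measurable_subtype_coe).aestronglyMeasurable)
          (integrable_const C)
          (fun n => ae_of_all _ fun z => by
            simpa [Real.norm_eq_abs] using (hmb n).2 z.1)
          (ae_of_all _ fun z => hlim z.1)
      have h2 : (fun n => ∫ z, F n z.1 ∂(Pm hM ⟨y, hy⟩)) = fun n => F (n + 1) y := by
        funext n
        rw [← TR_of_mem hM (F n) hy]
        exact (congrFun (Function.iterate_succ_apply' (TR hM) n f₀) y).symm
      rw [h2] at h1
      have h3 : Tendsto (fun n => F (n + 1) y) atTop (𝓝 (q y)) :=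
        (hlim y).comp (tendsto_add_atTop_nat 1)
      exact tendsto_nhds_unique h1 h3
    · rw [TR_of_not_mem hM q hy]
  have hqc : Continuous q := by
    rw [continuous_iff_continuousAt]
    intro x
    by_cases hx : x ∈ U
    · have : q = TR hM q := funext fun y => (hfix y).symm
      rw [this]
      exact TR_continuousAt hM hSF hUopen hqm hqb x hx
    · apply cont_at_of_barrier hA hx q (f₀ x) (hbdvals x hx)
      intro ε hε
      obtain ⟨c, hc, hcb⟩ := iter_bounds hM hSF hUopen hA hx hf₀ hε
      refine ⟨c, hc, fun y => ⟨?_, ?_⟩⟩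
      · exact le_trans (hcb 0 y).1 (hge 0 y)
      · exact ciSup_le fun n => (hcb n y).2
  refine ⟨q, hqc, hfix, fun y => hge 0 y, hbdvals, dini hFc hqc hmono hlim,
    fun w Cw hwm hwb hfw hw y => ?_⟩
  exact ciSup_le fun n => iter_le_superinv hM hSF hUopen hf₀.measurable hC hwm hwb hfw hw n y

/-! ### Variance / Cauchy-Schwarz -/

lemma var_lemma {μ : Measure ↥U} [IsProbabilityMeasure μ] {h : K → ℝ}
    (hm : Measurable h) {C : ℝ} (hb : ∀ y, |h y| ≤ C) :
    (∫ y, h y.1 ∂μ) ^ 2 ≤ ∫ y, (h y.1) ^ 2 ∂μ ∧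
    ((∫ y, (h y.1) ^ 2 ∂μ) ≤ (∫ y, h y.1 ∂μ) ^ 2 →
      ∀ᵐ y ∂μ, h y.1 = ∫ z, h z.1 ∂μ) := by
  set m := ∫ y, h y.1 ∂μ with hmdef
  have hint : Integrable (fun y : ↥U => h y.1) μ := integrable_of_bdd hm hb
  have hsqm : Measurable fun z : K => h z ^ 2 := hm.pow_const 2
  have hsqb : ∀ y, |h y ^ 2| ≤ C ^ 2 := by
    intro y
    rw [abs_pow]
    exact pow_le_pow_left₀ (abs_nonneg _) (hb y) 2
  have hint2 : Integrable (fun y : ↥U => h y.1 ^ 2) μ := integrable_of_bdd hsqm hsqb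
  have hvarm : Measurable fun z : K => (h z - m) ^ 2 := (hm.sub measurable_const).pow_const 2
  have hvarb : ∀ y, |(h y - m) ^ 2| ≤ (C + |m|) ^ 2 := by
    intro y
    rw [abs_pow]
    refine pow_le_pow_left₀ (abs_nonneg _) ?_ 2
    calc |h y - m| ≤ |h y| + |m| := abs_sub _ _
      _ ≤ C + |m| := by have := hb y; linarith
  have hintv : Integrable (fun y : ↥U => (h y.1 - m) ^ 2) μ := integrable_of_bdd hvarm hvarb
  have hexp : (∫ y : ↥U, (h y.1 - m) ^ 2 ∂μ) = (∫ y : ↥U, h y.1 ^ 2 ∂μ) - m ^ 2 := by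
    have e0 : (fun y : ↥U => (h y.1 - m) ^ 2)
        = fun y : ↥U => h y.1 ^ 2 - (2 * m) * h y.1 + m ^ 2 := by
      funext y; ring
    have hi1 : Integrable (fun y : ↥U => h y.1 ^ 2 - (2 * m) * h y.1) μ := by
      exact hint2.sub (hint.const_mul (2 * m))
    have hi2 : Integrable (fun y : ↥U => (2 * m) * h y.1) μ := by
      exact hint.const_mul (2 * m)
    rw [e0, integral_add hi1 (integrable_const _), integral_sub hint2 hi2,
      integral_const_mul, integral_const]
    simp only [measure_univ, probReal_univ, ENNReal.toReal_one, smul_eq_mul, one_mul, mul_one]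
    rw [← hmdef]; ring
  have hnn : 0 ≤ ∫ y : ↥U, (h y.1 - m) ^ 2 ∂μ := integral_nonneg fun y => sq_nonneg _
  constructor
  · rw [hexp] at hnn; linarith
  · intro hle
    have hz : (∫ y : ↥U, (h y.1 - m) ^ 2 ∂μ) = 0 := by rw [hexp]; linarith
    have := (integral_eq_zero_iff_of_nonneg (fun y => sq_nonneg _) hintv).1 hz
    filter_upwards [this] with y hy
    have : (h y.1 - m) ^ 2 = 0 := hy
    have := pow_eq_zero_iff (n := 2) (by norm_num) |>.1 this
    linarith [sub_eq_zero.1 this]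

/-! ### Condition (B) for real functions -/

lemma condB_real (hM : IsMarkovOperator Φ) (hB : CondB U Φ) {w : K → ℝ}
    (hw : Continuous w) (hsub : ∀ y ∈ U, w y ≤ TR hM w y)
    (hmax : ∃ z ∈ U, ∀ x, w x ≤ w z) : ∀ x y : K, w x = w y := by
  obtain ⟨C, hC⟩ := cont_bound w hw
  set g : C(K, ℂ) := ⟨fun y => ((w y : ℝ) : ℂ), Complex.continuous_ofReal.comp hw⟩ with hg
  have h1 : ∀ x : K, (g x).im = 0 := fun x => by simp [hg]
  have h2 : ∀ u : ↥U, g u.1 ≤ Φ (fun v : ↥U => g v.1) u := by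
    intro u
    have hrep := Pm_rep hM u (fun v : ↥U => ((w v.1 : ℝ) : ℂ))
      (by exact Complex.measurable_ofReal.comp (hw.measurable.comp measurable_subtype_coe))
      ⟨C, fun y => by simpa [Complex.norm_real, Real.norm_eq_abs] using hC y.1⟩
    have hior : (∫ y : ↥U, ((w y.1 : ℝ) : ℂ) ∂(Pm hM u))
        = ((∫ y : ↥U, w y.1 ∂(Pm hM u) : ℝ) : ℂ) := integral_ofReal
    show ((w u.1 : ℝ) : ℂ) ≤ Φ (fun v : ↥U => ((w v.1 : ℝ) : ℂ)) u
    rw [hrep, hior, Complex.real_le_real]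
    have hs := hsub u.1 u.2
    rwa [TR_of_mem hM w u.2, show (⟨u.1, u.2⟩ : ↥U) = u from rfl] at hs
  have h3 : ∃ z ∈ U, ∀ x : K, g x ≤ g z := by
    obtain ⟨z, hz, hzm⟩ := hmax
    exact ⟨z, hz, fun x => by
      show ((w x : ℝ) : ℂ) ≤ ((w z : ℝ) : ℂ)
      rw [Complex.real_le_real]; exact hzm x⟩
  have hconst := hB g h1 h2 h3
  intro x y
  have := hconst x y
  have : ((w x : ℝ) : ℂ) = ((w y : ℝ) : ℂ) := this
  exact_mod_cast this

/-! ### iterates of psiFun vs TR -/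

lemma psi_iter_coe (hM : IsMarkovOperator Φ) (hSF : HasStrongFeller Φ)
    (hUopen : IsOpen U) {f : K → ℝ} (hfm : Measurable f) {C : ℝ}
    (hfb : ∀ y, |f y| ≤ C) :
    ∀ n, (psiFun U Φ)^[n] (fun z => ((f z : ℝ) : ℂ))
      = fun z => (((TR hM)^[n] f z : ℝ) : ℂ) := by
  intro n
  induction n with
  | zero => rfl
  | succ m ih =>
    rw [Function.iterate_succ_apply', ih, Function.iterate_succ_apply']
    exact psi_coe hM _ (iter_meas_bdd hM hSF hUopen hfm hfb m).1
      (iter_meas_bdd hM hSF hUopen hfm hfb m).2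

lemma coe_dist (a b : ℝ) : dist ((a : ℝ) : ℂ) ((b : ℝ) : ℂ) = dist a b := by
  rw [Complex.dist_eq, ← Complex.ofReal_sub, Complex.norm_real, Real.norm_eq_abs, Real.dist_eq]

/-! ### Key construction: for interior points there is a witness -/

lemma key_lemma (hUopen : IsOpen U)
    (hbd : ∃ a b : K, a ∈ Uᶜ ∧ b ∈ Uᶜ ∧ a ≠ b)
    (hM : IsMarkovOperator Φ) (hSF : HasStrongFeller Φ)
    (hA : CondA U Φ) (hB : CondB U Φ) {x₀ : K} (hx₀ : x₀ ∈ U) :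
    ∃ (h : C(K, ℂ)) (p : K → ℂ), psiFun U Φ ⇑h = ⇑h ∧
      TendstoUniformly
        (fun n y => (psiFun U Φ)^[n] (fun z => ((‖h z‖ ^ 2 : ℝ) : ℂ)) y) p atTop ∧
      p x₀ - ((‖h x₀‖ ^ 2 : ℝ) : ℂ) ≠ 0 := by
  obtain ⟨a, b, ha, hb, hab⟩ := hbd
  -- π-limit of the barrier at a
  obtain ⟨hfun, hfc, hffix, hfge, hfbdv, -, hfsup⟩ :=
    pi_limit hM hSF hUopen hA (rbar_cont hA ha) (rbar_subinv hM hA ha)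
  obtain ⟨Ch, hCh⟩ := cont_bound hfun hfc
  have hfa : hfun a = 0 := by rw [hfbdv a ha, rbar_self hA ha]
  have hfb : hfun b < 0 := by rw [hfbdv b hb]; exact rbar_neg hA ha hab.symm
  have hfnonpos : ∀ y, hfun y ≤ 0 := by
    have := hfsup (fun _ => (0 : ℝ)) 0 measurable_const (fun y => by simp)
      (fun y => rbar_nonpos hA ha y) (fun y => by rw [TR_const hM (0 : ℝ) y])
    exact this
  have hneg : ∀ z, z ≠ a → hfun z < 0 := by
    intro z hz
    rcases lt_or_eq_of_le (hfnonpos z) with h | h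
    · exact h
    by_cases hzU : z ∈ U
    · have hconst := condB_real hM hB hfc (fun y _ => (hffix y).ge.trans_eq rfl)
        ⟨z, hzU, fun x => by rw [h]; exact hfnonpos x⟩
      exact absurd ((hconst b z).trans h) hfb.ne
    · have heq : hfun z = rbar hA ha z := hfbdv z hzU
      rw [heq] at h
      exact absurd h (rbar_neg hA ha hz).ne
  have hx₀a : x₀ ≠ a := fun hcc => ha (hcc ▸ hx₀)
  have hfx₀ : hfun x₀ < 0 := hneg x₀ hx₀a
  -- square
  set sq : K → ℝ := fun y => hfun y ^ 2 with hsqdef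
  have hsqc : Continuous sq := hfc.pow 2
  obtain ⟨Cs, hCs⟩ := cont_bound sq hsqc
  have hsqsub : ∀ y, sq y ≤ TR hM sq y := by
    intro y
    by_cases hy : y ∈ U
    · rw [TR_of_mem hM sq hy]
      have hvar := (var_lemma (μ := Pm hM ⟨y, hy⟩) hfc.measurable hCh).1
      have hmean : (∫ z : ↥U, hfun z.1 ∂(Pm hM ⟨y, hy⟩)) = hfun y := by
        rw [← TR_of_mem hM hfun hy, hffix y]
      rw [hmean] at hvar
      exact hvar
    · rw [TR_of_not_mem hM sq hy]
  obtain ⟨p, hpc, hpfix, hpge, hpbdv, hpuni, -⟩ :=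
    pi_limit hM hSF hUopen hA hsqc hsqsub
  obtain ⟨Cp, hCp⟩ := cont_bound p hpc
  -- strictness at x₀
  have hstrict : sq x₀ < p x₀ := by
    rcases lt_or_eq_of_le (hpge x₀) with h | h
    · exact h
    exfalso
    -- w = sq - p attains max 0 at x₀
    set w : K → ℝ := fun y => sq y - p y with hwdef
    have hwc : Continuous w := hsqc.sub hpc
    have hsubw : ∀ y ∈ U, w y ≤ TR hM w y := by
      intro y hy
      have := TR_sub hM hsqc.measurable hCs hpc.measurable hCp y
      rw [hwdef]
      simp only []
      rw [this, hpfix y]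
      have := hsqsub y
      linarith
    have hmaxw : ∃ z ∈ U, ∀ x, w x ≤ w z := by
      refine ⟨x₀, hx₀, fun x => ?_⟩
      have h1 := hpge x
      simp only [hwdef]
      rw [← h]
      linarith
    have hconstw := condB_real hM hB hwc hsubw hmaxw
    have hweq : ∀ y, p y = sq y := by
      intro y
      have := hconstw y x₀
      simp only [hwdef] at this
      rw [← h] at this
      linarith
    -- equality in Cauchy-Schwarz at every point of U
    have hae : ∀ (z : K) (hz : z ∈ U), ∀ᵐ v ∂(Pm hM ⟨z, hz⟩), hfun v.1 = hfun z := by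
      intro z hz
      have h2 := (var_lemma (μ := Pm hM ⟨z, hz⟩) hfc.measurable hCh).2
      have hmean : (∫ v : ↥U, hfun v.1 ∂(Pm hM ⟨z, hz⟩)) = hfun z := by
        rw [← TR_of_mem hM hfun hz, hffix z]
      have hsqle : (∫ v : ↥U, (hfun v.1) ^ 2 ∂(Pm hM ⟨z, hz⟩)) ≤ (hfun z) ^ 2 := by
        have e1 : (∫ v : ↥U, (hfun v.1) ^ 2 ∂(Pm hM ⟨z, hz⟩)) = TR hM sq z :=
          (TR_of_mem hM sq hz).symm
        rw [e1]
        calc TR hM sq z ≤ TR hM p z :=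
              TR_mono hM hsqc.measurable hCs hpc.measurable hCp hpge z
          _ = p z := hpfix z
          _ = sq z := hweq z
      rw [hmean] at h2
      exact h2 hsqle
    -- the function w₂ = -(hfun - hfun x₀)² contradicts (B)
    set w₂ : K → ℝ := fun y => -((hfun y - hfun x₀) ^ 2) with hw₂def
    have hw₂c : Continuous w₂ := ((hfc.sub continuous_const).pow 2).neg
    have hsubw₂ : ∀ y ∈ U, w₂ y ≤ TR hM w₂ y := by
      intro z hz
      rw [TR_of_mem hM w₂ hz]
      have : (∫ v : ↥U, w₂ v.1 ∂(Pm hM ⟨z, hz⟩)) = w₂ z := by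
        rw [integral_congr_ae ((hae z hz).mono fun v hv => by
          simp only [hw₂def]; rw [hv])]
        simp [measure_univ]
        rfl
      rw [this]
    have hmax₂ : ∃ z ∈ U, ∀ x, w₂ x ≤ w₂ z := by
      refine ⟨x₀, hx₀, fun x => ?_⟩
      simp only [hw₂def]
      have := sq_nonneg (hfun x - hfun x₀)
      simp only [sub_self]
      norm_num
      exact this
    have hconst₂ := condB_real hM hB hw₂c hsubw₂ hmax₂
    have hcontr := hconst₂ a x₀
    simp only [hw₂def, hfa] at hcontr
    have h4 : (hfun x₀) ^ 2 = 0 := by nlinarith [hcontr]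
    have h5 : hfun x₀ = 0 := by
      have := sq_eq_zero_iff.1 h4
      exact this
    exact absurd h5 hfx₀.ne
  -- bundle the witnesses
  refine ⟨⟨fun y => ((hfun y : ℝ) : ℂ), Complex.continuous_ofReal.comp hfc⟩,
    fun y => ((p y : ℝ) : ℂ), ?_, ?_, ?_⟩
  · show psiFun U Φ (fun y => ((hfun y : ℝ) : ℂ)) = fun y => ((hfun y : ℝ) : ℂ)
    rw [psi_coe hM hfun hfc.measurable hCh]
    funext y
    rw [hffix y]
  · have hnorm : (fun z => ((‖(fun y => ((hfun y : ℝ) : ℂ)) z‖ ^ 2 : ℝ) : ℂ))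
        = fun z => ((sq z : ℝ) : ℂ) := by
      funext z
      simp only [hsqdef]
      rw [Complex.norm_real, Real.norm_eq_abs, sq_abs]
    show TendstoUniformly
      (fun n y => (psiFun U Φ)^[n] (fun z => ((‖((hfun z : ℝ) : ℂ)‖ ^ 2 : ℝ) : ℂ)) y)
      (fun y => ((p y : ℝ) : ℂ)) atTop
    have hfn : (fun z => ((‖((hfun z : ℝ) : ℂ)‖ ^ 2 : ℝ) : ℂ))
        = fun z => ((sq z : ℝ) : ℂ) := by
      funext z
      simp only [hsqdef]
      rw [Complex.norm_real, Real.norm_eq_abs, sq_abs]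
    rw [hfn]
    have hiter := psi_iter_coe hM hSF hUopen hsqc.measurable hCs
    rw [Metric.tendstoUniformly_iff]
    rw [Metric.tendstoUniformly_iff] at hpuni
    intro ε hε
    filter_upwards [hpuni ε hε] with n hn y
    rw [hiter n]
    rw [coe_dist]
    exact hn y
  · show ((p x₀ : ℝ) : ℂ) - ((‖((hfun x₀ : ℝ) : ℂ)‖ ^ 2 : ℝ) : ℂ) ≠ 0
    rw [Complex.norm_real, Real.norm_eq_abs, sq_abs, ← Complex.ofReal_sub]
    rw [Complex.ofReal_ne_zero, sub_ne_zero]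
    exact fun hcc => absurd hcc.symm hstrict.ne

end Dev

/-- With `L = {π(|h|²) − |h|² : h ∈ Fix(Ψ)}`, the boundary
`∂U` is exactly the common zero set of `L`; in particular no point of `U`
is a common zero of `L`. -/
theorem stmt16 {K : Type*} [MetricSpace K] [CompactSpace K]
    [MeasurableSpace K] [BorelSpace K]
    (U : Set K) (hUopen : IsOpen U) (hUdense : Dense U)
    (hbd : ∃ a b : K, a ∈ Uᶜ ∧ b ∈ Uᶜ ∧ a ≠ b)
    (Φ : (↥U → ℂ) → (↥U → ℂ))
    (hM : IsMarkovOperator Φ) (hSF : HasStrongFeller Φ)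
    (hA : CondA U Φ) (hB : CondB U Φ) :
    Uᶜ = {x : K | ∀ (h : C(K, ℂ)) (p : K → ℂ), psiFun U Φ ⇑h = ⇑h →
        TendstoUniformly
          (fun n y => (psiFun U Φ)^[n] (fun z => ((‖h z‖ ^ 2 : ℝ) : ℂ)) y)
          p atTop →
        p x - ((‖h x‖ ^ 2 : ℝ) : ℂ) = 0} ∧
    ¬ ∃ z₀ ∈ U, ∀ (h : C(K, ℂ)) (p : K → ℂ), psiFun U Φ ⇑h = ⇑h →
        TendstoUniformly
          (fun n y => (psiFun U Φ)^[n] (fun z => ((‖h z‖ ^ 2 : ℝ) : ℂ)) y)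
          p atTop →
        p z₀ - ((‖h z₀‖ ^ 2 : ℝ) : ℂ) = 0 := by
  have hset : Uᶜ = {x : K | ∀ (h : C(K, ℂ)) (p : K → ℂ), psiFun U Φ ⇑h = ⇑h →
      TendstoUniformly
        (fun n y => (psiFun U Φ)^[n] (fun z => ((‖h z‖ ^ 2 : ℝ) : ℂ)) y)
        p atTop →
      p x - ((‖h x‖ ^ 2 : ℝ) : ℂ) = 0} := by
    ext x
    simp only [Set.mem_setOf_eq, Set.mem_compl_iff]
    constructor
    · intro hx h p hfix hconv
      have hiter : ∀ n, (psiFun U Φ)^[n] (fun z => ((‖h z‖ ^ 2 : ℝ) : ℂ)) x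
          = ((‖h x‖ ^ 2 : ℝ) : ℂ) := by
        intro n
        induction n with
        | zero => rfl
        | succ m ih =>
          rw [Function.iterate_succ_apply',
            show psiFun U Φ ((psiFun U Φ)^[m] (fun z => ((‖h z‖ ^ 2 : ℝ) : ℂ))) x
              = (psiFun U Φ)^[m] (fun z => ((‖h z‖ ^ 2 : ℝ) : ℂ)) x from dif_neg hx]
          exact ih
      have htend := hconv.tendsto_at x
      simp only [hiter] at htend
      have heq : p x = ((‖h x‖ ^ 2 : ℝ) : ℂ) :=
        tendsto_nhds_unique htend tendsto_const_nhds
      rw [heq, sub_self]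
    · intro hx
      intro hxU
      obtain ⟨h, p, hfix, hconv, hne⟩ := key_lemma hUopen hbd hM hSF hA hB hxU
      exact hne (hx h p hfix hconv)
  refine ⟨hset, ?_⟩
  rintro ⟨z₀, hz₀, hprop⟩
  have hmem : z₀ ∈ {x : K | ∀ (h : C(K, ℂ)) (p : K → ℂ), psiFun U Φ ⇑h = ⇑h →
      TendstoUniformly
        (fun n y => (psiFun U Φ)^[n] (fun z => ((‖h z‖ ^ 2 : ℝ) : ℂ)) y)
        p atTop →
      p x - ((‖h x‖ ^ 2 : ℝ) : ℂ) = 0} := hprop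
  rw [← hset] at hmem
  exact hmem hz₀
end

section
/- Let Fix(Ψ) = {h ∈ C(K) : Ψ(h) = h} and L = {π(|h|²) − |h|² : h ∈ Fix(Ψ)}. Then the norm-closed ideal of C(K) generated by L equals the ideal of all f ∈ C(K) that vanish identically on ∂U. -/
open MeasureTheory Filter Topology ComplexOrder

open Filter in
/-- The set `L = {π(|h|²) − |h|² : h ∈ Fix(Ψ)}`, where `π(|h|²)` is the
uniform limit of `{Ψⁿ(|h|²)}` (so `g ∈ L` iff `g + |h|²` is that limit
for some `h` fixed by `Ψ`). -/
def Lset {K : Type*} [TopologicalSpace K] (U : Set K)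
    (Φ : (↥U → ℂ) → (↥U → ℂ)) : Set C(K, ℂ) :=
  {g | ∃ h : C(K, ℂ), psiFun U Φ ⇑h = ⇑h ∧
    TendstoUniformly
      (fun n y => (psiFun U Φ)^[n] (fun z => ((‖h z‖ ^ 2 : ℝ) : ℂ)) y)
      (fun y => g y + ((‖h y‖ ^ 2 : ℝ) : ℂ)) atTop}

namespace Stmt17
set_option linter.unusedSectionVars false

variable {K : Type*} [MetricSpace K] [CompactSpace K] [MeasurableSpace K] [BorelSpace K]
  {U : Set K} {Φ : (↥U → ℂ) → (↥U → ℂ)}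

/-- restriction to `U` -/
abbrev resU (U : Set K) (f : K → ℂ) : ↥U → ℂ := fun v => f v.1

lemma psi_mem (f : K → ℂ) {x : K} (hx : x ∈ U) :
    psiFun U Φ f x = Φ (resU U f) ⟨x, hx⟩ := dif_pos hx

lemma psi_nmem (f : K → ℂ) {x : K} (hx : x ∉ U) : psiFun U Φ f x = f x := dif_neg hx

lemma psi_iter_nmem (f : K → ℂ) {x : K} (hx : x ∉ U) (n : ℕ) :
    (psiFun U Φ)^[n] f x = f x := by
  induction n with
  | zero => rfl
  | succ n ih => rw [Function.iterate_succ_apply', psi_nmem _ hx, ih]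

/-- bounded measurable function -/
def Nice (f : K → ℂ) (C : ℝ) : Prop := Measurable f ∧ ∀ y, ‖f y‖ ≤ C

lemma Nice.meas {f : K → ℂ} {C : ℝ} (h : Nice f C) : Measurable f := h.1
lemma Nice.bdd {f : K → ℂ} {C : ℝ} (h : Nice f C) : ∀ y, ‖f y‖ ≤ C := h.2

lemma Nice.res_meas {f : K → ℂ} {C : ℝ} (h : Nice f C) : Measurable (resU U f) :=
  h.1.comp measurable_subtype_coe

lemma Nice.res_bdd {f : K → ℂ} {C : ℝ} (h : Nice f C) :
    ∃ C' : ℝ, ∀ y : ↥U, ‖resU U f y‖ ≤ C' := ⟨C, fun y => h.2 y.1⟩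

lemma Nice.integrable {f : K → ℂ} {C : ℝ} (h : Nice f C) (P : Measure ↥U)
    [IsProbabilityMeasure P] : Integrable (resU U f) P := by
  refine (integrable_const C).mono' h.res_meas.aestronglyMeasurable ?_
  exact Eventually.of_forall fun y => h.2 y.1

/-- the representing measure, packaged for a point of `U`. -/
lemma exists_P (hM : IsMarkovOperator Φ) {x : K} (hx : x ∈ U) :
    ∃ P : Measure ↥U, IsProbabilityMeasure P ∧
      ∀ (f : K → ℂ) (C : ℝ), Nice f C → psiFun U Φ f x = ∫ y, f y.1 ∂P := by
  obtain ⟨P, hP, hrep⟩ := hM ⟨x, hx⟩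
  exact ⟨P, hP, fun f C hf => by
    rw [psi_mem f hx, hrep _ hf.res_meas ⟨C, fun y => hf.2 y.1⟩]⟩

lemma psi_bound (hM : IsMarkovOperator Φ) {f : K → ℂ} {C : ℝ} (hf : Nice f C) :
    ∀ y, ‖psiFun U Φ f y‖ ≤ C := by
  intro y
  by_cases hy : y ∈ U
  · obtain ⟨P, hP, hrep⟩ := exists_P hM hy
    rw [hrep f C hf]
    calc ‖∫ v, f v.1 ∂P‖ ≤ C * (P Set.univ).toReal :=
          norm_integral_le_of_norm_le_const (Eventually.of_forall fun v => hf.2 v.1)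
      _ = C := by simp
  · rw [psi_nmem f hy]; exact hf.2 y

lemma psi_measurable (hSF : HasStrongFeller Φ) (hUopen : IsOpen U)
    {f : K → ℂ} {C : ℝ} (hf : Nice f C) : Measurable (psiFun U Φ f) := by
  apply measurable_of_restrict_of_restrict_compl hUopen.measurableSet
  · have : U.domRestrict (psiFun U Φ f) = Φ (resU U f) := by
      funext v
      rw [Set.restrict_apply, psi_mem f v.2]
    rw [this]
    exact (hSF _ hf.res_meas hf.res_bdd).measurable
  · have : Uᶜ.domRestrict (psiFun U Φ f) = Uᶜ.domRestrict f := by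
      funext v
      rw [Set.restrict_apply, Set.restrict_apply, psi_nmem f v.2]
    rw [this]
    exact hf.1.comp measurable_subtype_coe

lemma Nice.psi (hM : IsMarkovOperator Φ) (hSF : HasStrongFeller Φ) (hUopen : IsOpen U)
    {f : K → ℂ} {C : ℝ} (hf : Nice f C) : Nice (psiFun U Φ f) C :=
  ⟨psi_measurable hSF hUopen hf, psi_bound hM hf⟩

lemma Nice.psi_iter (hM : IsMarkovOperator Φ) (hSF : HasStrongFeller Φ) (hUopen : IsOpen U)
    {f : K → ℂ} {C : ℝ} (hf : Nice f C) (n : ℕ) : Nice ((psiFun U Φ)^[n] f) C := by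
  induction n with
  | zero => exact hf
  | succ n ih => rw [Function.iterate_succ_apply']; exact ih.psi hM hSF hUopen


variable {K : Type*} [MetricSpace K] [CompactSpace K] [MeasurableSpace K] [BorelSpace K]
  {U : Set K} {Φ : (↥U → ℂ) → (↥U → ℂ)}

lemma integral_re' {α} [MeasurableSpace α] {μ : Measure α} {f : α → ℂ}
    (hf : Integrable f μ) : (∫ x, f x ∂μ).re = ∫ x, (f x).re ∂μ := by
  have := integral_re (𝕜 := ℂ) hf
  simpa [RCLike.re_to_complex] using this.symm

lemma integral_im' {α} [MeasurableSpace α] {μ : Measure α} {f : α → ℂ}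
    (hf : Integrable f μ) : (∫ x, f x ∂μ).im = ∫ x, (f x).im ∂μ := by
  have := integral_im (𝕜 := ℂ) hf
  simpa [RCLike.im_to_complex] using this.symm

lemma integrable_re2 {α} [MeasurableSpace α] {μ : Measure α} {f : α → ℂ}
    (hf : Integrable f μ) : Integrable (fun x => (f x).re) μ := by
  simpa [RCLike.re_to_complex] using hf.re

lemma norm_sq_of_real {z : ℂ} (hz : z.im = 0) : ‖z‖ ^ 2 = z.re ^ 2 := by
  rw [Complex.sq_norm, Complex.normSq_apply, hz]
  ring

lemma Nice.of_continuousMap (f : C(K, ℂ)) : Nice ⇑f ‖f‖ :=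
  ⟨f.continuous.measurable, fun y => f.norm_coe_le_norm y⟩

lemma Nice.nonneg {f : K → ℂ} {C : ℝ} (hf : Nice f C) (y : K) : 0 ≤ C :=
  (norm_nonneg _).trans (hf.2 y)

lemma psi_add (hM : IsMarkovOperator Φ) {f g : K → ℂ} {Cf Cg : ℝ}
    (hf : Nice f Cf) (hg : Nice g Cg) (x : K) :
    psiFun U Φ (fun y => f y + g y) x = psiFun U Φ f x + psiFun U Φ g x := by
  by_cases hx : x ∈ U
  · obtain ⟨P, hP, hrep⟩ := exists_P hM hx
    have hfg : Nice (fun y => f y + g y) (Cf + Cg) :=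
      ⟨hf.1.add hg.1, fun y => (norm_add_le _ _).trans (add_le_add (hf.2 y) (hg.2 y))⟩
    rw [hrep _ _ hfg, hrep f Cf hf, hrep g Cg hg]
    exact integral_add (hf.integrable P) (hg.integrable P)
  · simp [psi_nmem _ hx]

lemma psi_const (hM : IsMarkovOperator Φ) (c : ℂ) (x : K) :
    psiFun U Φ (fun _ => c) x = c := by
  by_cases hx : x ∈ U
  · obtain ⟨P, hP, hrep⟩ := exists_P hM hx
    rw [hrep _ ‖c‖ ⟨measurable_const, fun _ => le_rfl⟩]
    simp
  · exact psi_nmem _ hx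

lemma Nice.const_mul {f : K → ℂ} {C : ℝ} (hf : Nice f C) (c : ℂ) :
    Nice (fun y => c * f y) (‖c‖ * C) :=
  ⟨hf.1.const_mul c, fun y => by
    rw [norm_mul]
    exact mul_le_mul_of_nonneg_left (hf.2 y) (norm_nonneg c)⟩

lemma psi_const_mul (hM : IsMarkovOperator Φ) (c : ℂ) {f : K → ℂ} {C : ℝ}
    (hf : Nice f C) (x : K) :
    psiFun U Φ (fun y => c * f y) x = c * psiFun U Φ f x := by
  by_cases hx : x ∈ U
  · obtain ⟨P, hP, hrep⟩ := exists_P hM hx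
    rw [hrep _ _ (hf.const_mul c), hrep f C hf]
    exact integral_const_mul c _
  · simp [psi_nmem _ hx]

lemma psi_real (hM : IsMarkovOperator Φ) {f : K → ℂ} {C : ℝ} (hf : Nice f C)
    (hre : ∀ y, (f y).im = 0) (x : K) : (psiFun U Φ f x).im = 0 := by
  by_cases hx : x ∈ U
  · obtain ⟨P, hP, hrep⟩ := exists_P hM hx
    rw [hrep f C hf, integral_im' (hf.integrable P)]
    simp [hre]
  · rw [psi_nmem _ hx]; exact hre x

lemma psi_mono (hM : IsMarkovOperator Φ) {f g : K → ℂ} {Cf Cg : ℝ}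
    (hf : Nice f Cf) (hg : Nice g Cg) (hle : ∀ y, f y ≤ g y) (x : K) :
    psiFun U Φ f x ≤ psiFun U Φ g x := by
  by_cases hx : x ∈ U
  · obtain ⟨P, hP, hrep⟩ := exists_P hM hx
    rw [hrep f Cf hf, hrep g Cg hg, Complex.le_def]
    constructor
    · rw [integral_re' (hf.integrable P), integral_re' (hg.integrable P)]
      exact integral_mono (integrable_re2 (hf.integrable P))
        (integrable_re2 (hg.integrable P)) fun v => (Complex.le_def.mp (hle v.1)).1
    · rw [integral_im' (hf.integrable P), integral_im' (hg.integrable P)]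
      exact congrArg _ (funext fun v => (Complex.le_def.mp (hle v.1)).2)
  · rw [psi_nmem _ hx, psi_nmem _ hx]; exact hle x

lemma Nice.norm {f : K → ℂ} {C : ℝ} (hf : Nice f C) :
    Nice (fun y => ((‖f y‖ : ℝ) : ℂ)) C :=
  ⟨Complex.measurable_ofReal.comp hf.1.norm, fun y => by
    rw [Complex.norm_real, Real.norm_eq_abs, abs_of_nonneg (norm_nonneg _)]
    exact hf.2 y⟩

lemma psi_norm_le (hM : IsMarkovOperator Φ) {f : K → ℂ} {C : ℝ} (hf : Nice f C) (x : K) :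
    ‖psiFun U Φ f x‖ ≤ (psiFun U Φ (fun y => ((‖f y‖ : ℝ) : ℂ)) x).re := by
  by_cases hx : x ∈ U
  · obtain ⟨P, hP, hrep⟩ := exists_P hM hx
    rw [hrep f C hf, hrep _ C hf.norm]
    calc ‖∫ v, f v.1 ∂P‖ ≤ ∫ v, ‖f v.1‖ ∂P := norm_integral_le_integral_norm _
      _ = (∫ v, ((‖f v.1‖ : ℝ) : ℂ) ∂P).re := by
          rw [show (∫ v, ((‖f v.1‖ : ℝ) : ℂ) ∂P) = ((∫ v, ‖f v.1‖ ∂P : ℝ) : ℂ) from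
            integral_ofReal, Complex.ofReal_re]
  · rw [psi_nmem _ hx, psi_nmem _ hx, Complex.ofReal_re]

lemma Nice.sq_norm {f : K → ℂ} {C : ℝ} (hf : Nice f C) :
    Nice (fun y => ((‖f y‖ ^ 2 : ℝ) : ℂ)) (C ^ 2) :=
  ⟨Complex.measurable_ofReal.comp (hf.1.norm.pow_const 2), fun y => by
    rw [Complex.norm_real, Real.norm_eq_abs, abs_of_nonneg (sq_nonneg _)]
    have h1 : ‖f y‖ ≤ C := hf.2 y
    have h0 : (0 : ℝ) ≤ ‖f y‖ := norm_nonneg _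
    nlinarith⟩

lemma psi_sq_ge (hM : IsMarkovOperator Φ) {h : K → ℂ} {C : ℝ} (hh : Nice h C)
    (hre : ∀ y, (h y).im = 0) {x : K} (hx : x ∈ U)
    (hfix : psiFun U Φ h x = h x) :
    ((‖h x‖ ^ 2 : ℝ) : ℂ) ≤ psiFun U Φ (fun y => ((‖h y‖ ^ 2 : ℝ) : ℂ)) x := by
  obtain ⟨P, hP, hrep⟩ := exists_P hM hx
  set u : ↥U → ℝ := fun v => (h v.1).re with hu
  have hu_int : Integrable u P := integrable_re2 (hh.integrable P)
  have hu_meas : Measurable u := (Complex.measurable_re.comp (hh.res_meas))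
  have hu_bdd : ∀ v, |u v| ≤ C := fun v =>
    (Complex.abs_re_le_norm _).trans (hh.2 v.1)
  have hu2_int : Integrable (fun v => u v ^ 2) P := by
    refine (integrable_const (C ^ 2)).mono' (hu_meas.pow_const 2).aestronglyMeasurable ?_
    refine Eventually.of_forall fun v => ?_
    rw [Real.norm_eq_abs, abs_of_nonneg (sq_nonneg _)]
    calc u v ^ 2 = |u v| ^ 2 := (sq_abs _).symm
      _ ≤ C ^ 2 := by nlinarith [hu_bdd v, abs_nonneg (u v)]
  rw [hrep _ _ hh.sq_norm]
  have hsqre : ∀ y : K, ((‖h y‖ ^ 2 : ℝ) : ℂ) = (((h y).re ^ 2 : ℝ) : ℂ) := fun y => by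
    rw [norm_sq_of_real (hre y)]
  have hRHS : ∫ v, ((‖h v.1‖ ^ 2 : ℝ) : ℂ) ∂P = ((∫ v, u v ^ 2 ∂P : ℝ) : ℂ) := by
    simp_rw [hsqre]
    exact integral_ofReal
  rw [hRHS, hsqre x]
  rw [Complex.real_le_real]
  -- now a real statement: (h x).re ^ 2 ≤ ∫ u ^ 2
  have hm : (h x).re = ∫ v, u v ∂P := by
    conv_lhs => rw [← hfix, hrep h C hh]
    exact integral_re' (hh.integrable P)
  set m : ℝ := ∫ v, u v ∂P with hmdef
  rw [hm]
  have key : 0 ≤ ∫ v, (u v - m) ^ 2 ∂P := integral_nonneg fun v => sq_nonneg _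
  have expand : ∫ v, (u v - m) ^ 2 ∂P = (∫ v, u v ^ 2 ∂P) - m ^ 2 := by
    have : (fun v => (u v - m) ^ 2) = fun v => u v ^ 2 - (2 * m) * u v + m ^ 2 := by
      funext v; ring
    rw [this, integral_add (by exact (hu2_int.sub (hu_int.const_mul (2 * m))))
      (integrable_const _), integral_sub hu2_int (hu_int.const_mul (2 * m)),
      integral_const_mul, integral_const]
    simp only [probReal_univ, measure_univ, ENNReal.toReal_one, smul_eq_mul, one_mul]
    rw [← hmdef]; ring
  linarith [key, expand ▸ key]


set_option linter.unusedSectionVars false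

variable {K : Type*} [MetricSpace K] [CompactSpace K] [MeasurableSpace K] [BorelSpace K]
  {U : Set K} {Φ : (↥U → ℂ) → (↥U → ℂ)}

lemma iter_mono_step (hM : IsMarkovOperator Φ) (hSF : HasStrongFeller Φ) (hUopen : IsOpen U)
    {f : K → ℂ} {C : ℝ} (hf : Nice f C) (hge : ∀ y, f y ≤ psiFun U Φ f y) :
    ∀ n y, (psiFun U Φ)^[n] f y ≤ (psiFun U Φ)^[n + 1] f y := by
  intro n
  induction n with
  | zero => exact hge
  | succ n ih =>
    intro y
    rw [Function.iterate_succ_apply', Function.iterate_succ_apply']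
    exact psi_mono hM (hf.psi_iter hM hSF hUopen n) (hf.psi_iter hM hSF hUopen (n + 1)) ih y

lemma iter_ge_self (hM : IsMarkovOperator Φ) (hSF : HasStrongFeller Φ) (hUopen : IsOpen U)
    {f : K → ℂ} {C : ℝ} (hf : Nice f C) (hge : ∀ y, f y ≤ psiFun U Φ f y) :
    ∀ n y, f y ≤ (psiFun U Φ)^[n] f y := by
  intro n
  induction n with
  | zero => exact fun y => le_rfl
  | succ n ih => exact fun y => (ih y).trans (iter_mono_step hM hSF hUopen hf hge n y)

lemma iter_real (hM : IsMarkovOperator Φ) (hSF : HasStrongFeller Φ) (hUopen : IsOpen U)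
    {f : K → ℂ} {C : ℝ} (hf : Nice f C) (hre : ∀ y, (f y).im = 0) :
    ∀ n y, ((psiFun U Φ)^[n] f y).im = 0 := by
  intro n
  induction n with
  | zero => exact hre
  | succ n ih =>
    intro y
    rw [Function.iterate_succ_apply']
    exact psi_real hM (hf.psi_iter hM hSF hUopen n) ih y

/-- The pointwise monotone limit of the iterates of a subinvariant function. -/
lemma exists_limit (hM : IsMarkovOperator Φ) (hSF : HasStrongFeller Φ) (hUopen : IsOpen U)
    {f : K → ℂ} {C : ℝ} (hf : Nice f C) (hre : ∀ y, (f y).im = 0)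
    (hge : ∀ y, f y ≤ psiFun U Φ f y) :
    ∃ q : K → ℂ, Nice q C ∧ (∀ y, (q y).im = 0) ∧ (∀ y, psiFun U Φ q y = q y) ∧
      (∀ x, x ∉ U → q x = f x) ∧ (∀ n y, (psiFun U Φ)^[n] f y ≤ q y) ∧
      (∀ y, Tendsto (fun n => (psiFun U Φ)^[n] f y) atTop (𝓝 (q y))) := by
  set r : ℕ → K → ℝ := fun n y => ((psiFun U Φ)^[n] f y).re with hr
  have hiter : ∀ n, Nice ((psiFun U Φ)^[n] f) C := hf.psi_iter hM hSF hUopen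
  have hrealn : ∀ n y, ((psiFun U Φ)^[n] f y).im = 0 := iter_real hM hSF hUopen hf hre
  have hofReal : ∀ n y, (psiFun U Φ)^[n] f y = ((r n y : ℝ) : ℂ) := fun n y =>
    Complex.ext rfl (by rw [Complex.ofReal_im, hrealn n y])
  have hmono : ∀ y, Monotone fun n => r n y := fun y =>
    monotone_nat_of_le_succ fun n =>
      (Complex.le_def.mp (iter_mono_step hM hSF hUopen hf hge n y)).1
  have habs : ∀ n y, |r n y| ≤ C := fun n y =>
    (Complex.abs_re_le_norm _).trans ((hiter n).2 y)
  have hbdd : ∀ y, BddAbove (Set.range fun n => r n y) := fun y =>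
    ⟨C, by rintro - ⟨n, rfl⟩; exact (le_abs_self _).trans (habs n y)⟩
  set s : K → ℝ := fun y => ⨆ n, r n y with hs
  have htr : ∀ y, Tendsto (fun n => r n y) atTop (𝓝 (s y)) := fun y =>
    tendsto_atTop_ciSup (hmono y) (hbdd y)
  set q : K → ℂ := fun y => ((s y : ℝ) : ℂ) with hq
  have htq : ∀ y, Tendsto (fun n => (psiFun U Φ)^[n] f y) atTop (𝓝 (q y)) := by
    intro y
    have h := (Complex.continuous_ofReal.tendsto (s y)).comp (htr y)
    have he : (Complex.ofReal ∘ fun n => r n y) = fun n => (psiFun U Φ)^[n] f y := by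
      funext n; rw [Function.comp_apply, ← hofReal n y]
    rw [he] at h
    exact h
  have hqmeas : Measurable q := by
    apply measurable_of_tendsto_metrizable (fun n => (hiter n).1)
    rw [tendsto_pi_nhds]
    exact htq
  have hqbdd : ∀ y, ‖q y‖ ≤ C := by
    intro y
    have h1 : s y ≤ C := ciSup_le fun n => (le_abs_self _).trans (habs n y)
    have h2 : -C ≤ s y := le_trans (by
      have := habs 0 y
      linarith [abs_le.mp this]) (le_ciSup (hbdd y) 0)
    rw [hq, Complex.norm_real, Real.norm_eq_abs, abs_le]
    exact ⟨h2, h1⟩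
  have hqnice : Nice q C := ⟨hqmeas, hqbdd⟩
  have hle : ∀ n y, (psiFun U Φ)^[n] f y ≤ q y := fun n y => by
    rw [hofReal n y]
    rw [Complex.le_def]
    exact ⟨le_ciSup (hbdd y) n, rfl⟩
  have hbdry : ∀ x, x ∉ U → q x = f x := by
    intro x hx
    have h1 : ∀ n, r n x = (f x).re := fun n => by
      show ((psiFun U Φ)^[n] f x).re = (f x).re
      rw [psi_iter_nmem f hx n]
    have hsx : s x = (f x).re := by
      show (⨆ n, r n x) = (f x).re
      simp only [h1]
      exact ciSup_const
    show ((s x : ℝ) : ℂ) = f x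
    rw [hsx]
    apply Complex.ext
    · rfl
    · rw [Complex.ofReal_im]
      exact (hre x).symm
  have hfix : ∀ y, psiFun U Φ q y = q y := by
    intro y
    by_cases hy : y ∈ U
    · obtain ⟨P, hP, hrep⟩ := exists_P hM hy
      have h1 : Tendsto (fun n => ∫ v, (psiFun U Φ)^[n] f v.1 ∂P) atTop
          (𝓝 (∫ v, q v.1 ∂P)) := by
        apply tendsto_integral_of_dominated_convergence (fun _ => C)
          (fun n => ((hiter n).res_meas).aestronglyMeasurable) (integrable_const C)
          (fun n => Eventually.of_forall fun v => (hiter n).2 v.1)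
        exact Eventually.of_forall fun v => htq v.1
      have h2 : Tendsto (fun n => (psiFun U Φ)^[n + 1] f y) atTop (𝓝 (psiFun U Φ q y)) := by
        rw [hrep q C hqnice]
        have : ∀ n, (psiFun U Φ)^[n + 1] f y = ∫ v, (psiFun U Φ)^[n] f v.1 ∂P := fun n => by
          rw [Function.iterate_succ_apply', hrep _ C (hiter n)]
        simpa only [this] using h1
      have h3 : Tendsto (fun n => (psiFun U Φ)^[n + 1] f y) atTop (𝓝 (q y)) :=
        (htq y).comp (tendsto_add_atTop_nat 1)
      exact tendsto_nhds_unique h2 h3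
    · exact psi_nmem q hy
  exact ⟨q, hqnice, fun y => Complex.ofReal_im _, hfix, hbdry, hle, htq⟩

lemma exists_barrier (hA : CondA U Φ) {x : K} (hx : x ∈ Uᶜ) :
    ∃ hb : C(K, ℂ), hb x = 0 ∧ (∀ y, y ≠ x → hb y < 0) ∧ (∀ y, (hb y).im = 0) ∧
      (∀ y, (hb y).re ≤ 0) ∧ (∀ y, hb y ≤ psiFun U Φ ⇑hb y) := by
  obtain ⟨h, hx0, hlt, hΦ⟩ := hA x hx
  have him : ∀ y, (h y).im = 0 := by
    intro y
    by_cases hyx : y = x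
    · rw [hyx, hx0]; rfl
    · exact (Complex.lt_def.mp (hlt y hyx)).2
  have hre : ∀ y, (h y).re ≤ 0 := by
    intro y
    by_cases hyx : y = x
    · rw [hyx, hx0]; exact le_rfl
    · exact le_of_lt (by simpa using (Complex.lt_def.mp (hlt y hyx)).1)
  refine ⟨h, hx0, hlt, him, hre, fun y => ?_⟩
  by_cases hy : y ∈ U
  · rw [psi_mem _ hy]
    exact hΦ ⟨y, hy⟩
  · rw [psi_nmem _ hy]

lemma psi_affine (hM : IsMarkovOperator Φ) {g : K → ℂ} {Cg : ℝ} (hg : Nice g Cg)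
    (a b : ℂ) (x : K) :
    psiFun U Φ (fun y => a + b * g y) x = a + b * psiFun U Φ g x := by
  have h1 := psi_add hM (⟨measurable_const, fun _ => le_rfl⟩ : Nice (fun _ : K => a) ‖a‖)
    (hg.const_mul b) x
  rw [psi_const hM a x, psi_const_mul hM b hg x] at h1
  exact h1

lemma psi_sub_const (hM : IsMarkovOperator Φ) {g : K → ℂ} {Cg : ℝ} (hg : Nice g Cg)
    (c : ℂ) (x : K) :
    psiFun U Φ (fun y => g y - c) x = psiFun U Φ g x - c := by
  have h1 := psi_affine hM hg (-c) 1 x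
  simp only [one_mul] at h1
  have h2 : (fun y => g y - c) = fun y => -c + 1 * g y := by funext y; ring
  rw [h2]
  rw [psi_affine hM hg (-c) 1 x]
  ring

/-- Existence of the constant in the barrier estimate. -/
lemma exists_C (f : C(K, ℂ)) (x : K) (hb : C(K, ℂ)) (hbx : hb x = 0)
    (hblt : ∀ y, y ≠ x → hb y < 0) {ε : ℝ} (hε : 0 < ε) :
    ∃ C : ℝ, 0 ≤ C ∧ ∀ y, ‖f y - f x‖ ≤ ε - C * (hb y).re := by
  have hbre : ∀ y, (hb y).re ≤ 0 := by
    intro y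
    by_cases hyx : y = x
    · rw [hyx, hbx]; exact le_rfl
    · exact le_of_lt (by simpa using (Complex.lt_def.mp (hblt y hyx)).1)
  set S : Set K := {y | ε ≤ ‖f y - f x‖} with hS
  have hScl : IsClosed S := isClosed_le continuous_const ((f.continuous.sub continuous_const).norm)
  have hScomp : IsCompact S := hScl.isCompact
  rcases S.eq_empty_or_nonempty with hSe | hSne
  · refine ⟨0, le_rfl, fun y => ?_⟩
    have : y ∉ S := by rw [hSe]; exact Set.notMem_empty y
    rw [hS, Set.mem_setOf_eq, not_le] at this
    linarith
  · obtain ⟨y₀, hy₀S, hy₀max'⟩ := hScomp.exists_isMaxOn hSne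
      ((Complex.continuous_re.comp hb.continuous).continuousOn)
    have hy₀max : ∀ y ∈ S, (hb y).re ≤ (hb y₀).re := fun y hy => hy₀max' hy
    have hy₀x : y₀ ≠ x := by
      intro hcon
      have : ε ≤ ‖f y₀ - f x‖ := hy₀S
      rw [hcon] at this
      simp at this
      linarith
    set δ : ℝ := -(hb y₀).re with hδ
    have hδpos : 0 < δ := by
      have := (Complex.lt_def.mp (hblt y₀ hy₀x)).1
      simp only [Complex.zero_re] at this
      simp [hδ]; linarith
    obtain ⟨yM, -, hyM'⟩ := isCompact_univ.exists_isMaxOn ⟨x, Set.mem_univ x⟩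
      ((f.continuous.sub continuous_const).norm.continuousOn)
    have hyM : ∀ y : K, ‖f y - f x‖ ≤ ‖f yM - f x‖ := fun y => hyM' (Set.mem_univ y)
    set M : ℝ := ‖f yM - f x‖ with hM
    have hM0 : 0 ≤ M := norm_nonneg _
    refine ⟨M / δ, div_nonneg hM0 hδpos.le, fun y => ?_⟩
    by_cases hyS : y ∈ S
    · have h1 : (hb y).re ≤ (hb y₀).re := hy₀max y hyS
      have h2 : M / δ * (hb y).re ≤ M / δ * (hb y₀).re :=
        mul_le_mul_of_nonneg_left h1 (div_nonneg hM0 hδpos.le)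
      have h3 : M / δ * (hb y₀).re = -M := by
        rw [show (hb y₀).re = -δ from by simp [hδ]]
        field_simp
      have h4 : ‖f y - f x‖ ≤ M := hyM y
      linarith
    · rw [hS, Set.mem_setOf_eq, not_le] at hyS
      have : M / δ * (hb y).re ≤ 0 :=
        mul_nonpos_iff.mpr (Or.inl ⟨div_nonneg hM0 hδpos.le, hbre y⟩)
      linarith

/-- The key uniform-in-`n` barrier estimate for iterates. -/
lemma norm_iter_sub_le (hM : IsMarkovOperator Φ) (hSF : HasStrongFeller Φ)
    (hUopen : IsOpen U) (hA : CondA U Φ) (f : C(K, ℂ)) {x : K} (hx : x ∈ Uᶜ)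
    {ε : ℝ} (hε : 0 < ε) :
    ∃ hb : C(K, ℂ), hb x = 0 ∧ (∀ y, (hb y).re ≤ 0) ∧
      ∃ C : ℝ, 0 ≤ C ∧ ∀ n y, ‖(psiFun U Φ)^[n] ⇑f y - f x‖ ≤ ε - C * (hb y).re := by
  obtain ⟨hb, hbx, hblt, hbim, hbre, hbge⟩ := exists_barrier hA hx
  obtain ⟨C, hC0, hCbd⟩ := exists_C f x hb hbx hblt hε
  have hbnice : Nice ⇑hb ‖hb‖ := Nice.of_continuousMap hb
  have hfnice : Nice ⇑f ‖f‖ := Nice.of_continuousMap f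
  have hbiter : ∀ n, Nice ((psiFun U Φ)^[n] ⇑hb) ‖hb‖ := hbnice.psi_iter hM hSF hUopen
  have hfiter : ∀ n, Nice ((psiFun U Φ)^[n] ⇑f) ‖f‖ := hfnice.psi_iter hM hSF hUopen
  have hbiterre : ∀ n y, ((psiFun U Φ)^[n] ⇑hb y).im = 0 := iter_real hM hSF hUopen hbnice hbim
  have hbge' : ∀ n y, (hb y).re ≤ ((psiFun U Φ)^[n] ⇑hb y).re := fun n y =>
    (Complex.le_def.mp (iter_ge_self hM hSF hUopen hbnice hbge n y)).1
  refine ⟨hb, hbx, hbre, C, hC0, ?_⟩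
  have key : ∀ n y, ‖(psiFun U Φ)^[n] ⇑f y - f x‖ ≤ ε - C * ((psiFun U Φ)^[n] ⇑hb y).re := by
    intro n
    induction n with
    | zero => exact hCbd
    | succ n ih =>
      intro y
      set gn := (psiFun U Φ)^[n] ⇑f with hgn
      set bn := (psiFun U Φ)^[n] ⇑hb with hbn
      have hgnnice : Nice gn ‖f‖ := hfiter n
      have hbnnice : Nice bn ‖hb‖ := hbiter n
      have hbnim : ∀ w, (bn w).im = 0 := by rw [hbn]; exact hbiterre n
      have step1 : (psiFun U Φ)^[n + 1] ⇑f y - f x = psiFun U Φ (fun z => gn z - f x) y := by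
        rw [Function.iterate_succ_apply', psi_sub_const hM hgnnice (f x) y]
      have hsubnice : Nice (fun z => gn z - f x) (‖f‖ + ‖f x‖) :=
        ⟨hgnnice.1.sub measurable_const, fun z => (norm_sub_le _ _).trans
          (add_le_add_left (hgnnice.2 z) _)⟩
      have step2 : ‖psiFun U Φ (fun z => gn z - f x) y‖ ≤
          (psiFun U Φ (fun z => ((‖gn z - f x‖ : ℝ) : ℂ)) y).re :=
        psi_norm_le hM hsubnice y
      have hRHSnice : Nice (fun z => (ε : ℂ) + (-(C : ℂ)) * bn z) (|ε| + C * ‖hb‖) := by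
        constructor
        · exact measurable_const.add (hbnnice.1.const_mul _)
        · intro z
          calc ‖(ε : ℂ) + (-(C : ℂ)) * bn z‖ ≤ ‖(ε : ℂ)‖ + ‖(-(C : ℂ)) * bn z‖ := norm_add_le _ _
            _ ≤ |ε| + C * ‖hb‖ := by
                rw [norm_mul]
                gcongr
                · simp
                · simp [abs_of_nonneg hC0]
                · exact hbnnice.2 z
      have step3 : psiFun U Φ (fun z => ((‖gn z - f x‖ : ℝ) : ℂ)) y ≤
          psiFun U Φ (fun z => (ε : ℂ) + (-(C : ℂ)) * bn z) y := by
        apply psi_mono hM hsubnice.norm hRHSnice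
        intro z
        rw [Complex.le_def]
        constructor
        · have h1 : ((ε : ℂ) + (-(C : ℂ)) * bn z).re = ε - C * (bn z).re := by
            simp [Complex.add_re, Complex.mul_re, hbiterre n z]
            ring
          rw [h1, Complex.ofReal_re]
          exact ih z
        · rw [Complex.add_im, Complex.mul_im, hbnim z]
          simp
      have step4 : psiFun U Φ (fun z => (ε : ℂ) + (-(C : ℂ)) * bn z) y =
          (ε : ℂ) + (-(C : ℂ)) * psiFun U Φ bn y := psi_affine hM hbnnice _ _ y
      have step5 : ((ε : ℂ) + (-(C : ℂ)) * psiFun U Φ bn y).re =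
          ε - C * ((psiFun U Φ)^[n + 1] ⇑hb y).re := by
        have him : (psiFun U Φ bn y).im = 0 := psi_real hM hbnnice hbnim y
        rw [Function.iterate_succ_apply', ← hbn]
        rw [Complex.add_re, Complex.mul_re, him]
        simp
        ring
      calc ‖(psiFun U Φ)^[n + 1] ⇑f y - f x‖
          = ‖psiFun U Φ (fun z => gn z - f x) y‖ := by rw [step1]
        _ ≤ (psiFun U Φ (fun z => ((‖gn z - f x‖ : ℝ) : ℂ)) y).re := step2
        _ ≤ ((ε : ℂ) + (-(C : ℂ)) * psiFun U Φ bn y).re := by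
            rw [← step4]
            exact (Complex.le_def.mp step3).1
        _ = ε - C * ((psiFun U Φ)^[n + 1] ⇑hb y).re := step5
  intro n y
  calc ‖(psiFun U Φ)^[n] ⇑f y - f x‖ ≤ ε - C * ((psiFun U Φ)^[n] ⇑hb y).re := key n y
    _ ≤ ε - C * (hb y).re := by
        have := hbge' n y
        nlinarith
lemma dist_of_real {z w : ℂ} (hz : z.im = 0) (hw : w.im = 0) :
    dist z w = |z.re - w.re| := by
  rw [dist_eq_norm]
  have : z - w = ((z.re - w.re : ℝ) : ℂ) := by
    apply Complex.ext
    · simp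
    · simp [Complex.sub_im, hz, hw]
  rw [this, Complex.norm_real, Real.norm_eq_abs]

lemma psi_continuousOn (hSF : HasStrongFeller Φ) {f : K → ℂ} {C : ℝ} (hf : Nice f C) :
    ContinuousOn (psiFun U Φ f) U := by
  rw [continuousOn_iff_continuous_restrict]
  have : U.domRestrict (psiFun U Φ f) = Φ (resU U f) := by
    funext v
    rw [Set.restrict_apply, psi_mem f v.2]
  rw [this]
  exact hSF _ hf.res_meas hf.res_bdd

lemma fixed_continuousOn (hSF : HasStrongFeller Φ) {q : K → ℂ} {C : ℝ} (hq : Nice q C)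
    (hfix : ∀ y, psiFun U Φ q y = q y) : ContinuousOn q U := by
  have h := psi_continuousOn (U := U) (Φ := Φ) hSF hq
  have : psiFun U Φ q = q := funext hfix
  rwa [this] at h

lemma continuousAt_boundary_of_bound (hM : IsMarkovOperator Φ) (hSF : HasStrongFeller Φ)
    (hUopen : IsOpen U) (hA : CondA U Φ) (f : C(K, ℂ)) {x : K} (hx : x ∈ Uᶜ)
    {g : K → ℂ} (hgx : g x = f x)
    (hbound : ∀ ε : ℝ, 0 < ε → ∃ hb : C(K, ℂ), hb x = 0 ∧
      ∃ C : ℝ, 0 ≤ C ∧ ∀ y, ‖g y - f x‖ ≤ ε - C * (hb y).re) :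
    ContinuousAt g x := by
  rw [ContinuousAt, Metric.tendsto_nhds]
  intro ε hε
  have hε3 : 0 < ε / 3 := by linarith
  obtain ⟨hb, hbx, C, hC0, hCbd⟩ := hbound (ε / 3) hε3
  have h0 : Tendsto (fun y => C * (hb y).re) (𝓝 x) (𝓝 0) := by
    have hc : Continuous fun y => C * (hb y).re :=
      continuous_const.mul (Complex.continuous_re.comp hb.continuous)
    have := hc.tendsto x
    rw [hbx] at this
    simpa using this
  have h1 : ∀ᶠ y in 𝓝 x, |C * (hb y).re| < ε / 3 := by
    have := Metric.tendsto_nhds.mp h0 (ε / 3) hε3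
    simpa [Real.dist_eq, abs_mul] using this
  filter_upwards [h1] with y hy
  have h2 : ‖g y - f x‖ ≤ ε / 3 - C * (hb y).re := hCbd y
  have h3 : dist (g y) (g x) = ‖g y - f x‖ := by rw [hgx, dist_eq_norm]
  rw [h3]
  have := abs_lt.mp hy
  linarith

lemma psi_continuous (hM : IsMarkovOperator Φ) (hSF : HasStrongFeller Φ)
    (hUopen : IsOpen U) (hA : CondA U Φ) (f : C(K, ℂ)) :
    Continuous (psiFun U Φ ⇑f) := by
  rw [continuous_iff_continuousAt]
  intro x
  by_cases hx : x ∈ U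
  · exact (psi_continuousOn hSF (Nice.of_continuousMap f)).continuousAt (hUopen.mem_nhds hx)
  · apply continuousAt_boundary_of_bound hM hSF hUopen hA f hx (psi_nmem _ hx)
    intro ε hε
    obtain ⟨hb, hbx, hbre, C, hC0, hCbd⟩ := norm_iter_sub_le hM hSF hUopen hA f hx hε
    exact ⟨hb, hbx, C, hC0, fun y => by
      have := hCbd 1 y
      rwa [Function.iterate_one] at this⟩

/-- `ψ` maps continuous functions to continuous functions; hence so do all iterates. -/
lemma psi_iter_continuous (hM : IsMarkovOperator Φ) (hSF : HasStrongFeller Φ)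
    (hUopen : IsOpen U) (hA : CondA U Φ) (f : C(K, ℂ)) (n : ℕ) :
    ∃ g : C(K, ℂ), (psiFun U Φ)^[n] ⇑f = ⇑g := by
  induction n with
  | zero => exact ⟨f, rfl⟩
  | succ n ih =>
    obtain ⟨g, hg⟩ := ih
    refine ⟨⟨psiFun U Φ ⇑g, psi_continuous hM hSF hUopen hA g⟩, ?_⟩
    rw [Function.iterate_succ_apply', hg]
    rfl

/-- Main construction: the monotone limit of the iterates of a continuous
subinvariant function is a continuous fixed point, and convergence is uniform. -/
lemma build_limit (hM : IsMarkovOperator Φ) (hSF : HasStrongFeller Φ)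
    (hUopen : IsOpen U) (hA : CondA U Φ) (f : C(K, ℂ)) (hre : ∀ y, (f y).im = 0)
    (hge : ∀ y, f y ≤ psiFun U Φ ⇑f y) :
    ∃ q : C(K, ℂ), (∀ y, psiFun U Φ ⇑q y = q y) ∧ (∀ y, (q y).im = 0) ∧
      (∀ x, x ∉ U → q x = f x) ∧ (∀ n y, (psiFun U Φ)^[n] ⇑f y ≤ q y) ∧
      TendstoUniformly (fun n y => (psiFun U Φ)^[n] ⇑f y) (⇑q) atTop := by
  have hfnice : Nice ⇑f ‖f‖ := Nice.of_continuousMap f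
  obtain ⟨q₀, hqnice, hqim, hqfix, hqbdry, hqle, hqtend⟩ :=
    exists_limit hM hSF hUopen hfnice hre hge
  have hcont : Continuous q₀ := by
    rw [continuous_iff_continuousAt]
    intro x
    by_cases hx : x ∈ U
    · exact (fixed_continuousOn hSF hqnice hqfix).continuousAt (hUopen.mem_nhds hx)
    · apply continuousAt_boundary_of_bound hM hSF hUopen hA f hx (hqbdry x hx)
      intro ε hε
      obtain ⟨hb, hbx, hbre, C, hC0, hCbd⟩ := norm_iter_sub_le hM hSF hUopen hA f hx hε
      refine ⟨hb, hbx, C, hC0, fun y => ?_⟩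
      have htnorm : Tendsto (fun n => ‖(psiFun U Φ)^[n] ⇑f y - f x‖) atTop
          (𝓝 ‖q₀ y - f x‖) := ((hqtend y).sub tendsto_const_nhds).norm
      exact le_of_tendsto htnorm (Eventually.of_forall fun n => hCbd n y)
  set q : C(K, ℂ) := ⟨q₀, hcont⟩ with hqdef
  have hiterim : ∀ n y, ((psiFun U Φ)^[n] ⇑f y).im = 0 := iter_real hM hSF hUopen hfnice hre
  have hmonore : ∀ n y, ((psiFun U Φ)^[n] ⇑f y).re ≤ ((psiFun U Φ)^[n + 1] ⇑f y).re :=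
    fun n y => (Complex.le_def.mp (iter_mono_step hM hSF hUopen hfnice hge n y)).1
  refine ⟨q, hqfix, hqim, hqbdry, hqle, ?_⟩
  rw [Metric.tendstoUniformly_iff]
  intro ε hε
  set E : ℕ → Set K := fun n => {y | (q₀ y).re - ((psiFun U Φ)^[n] ⇑f y).re < ε} with hE
  have hEopen : ∀ n, IsOpen (E n) := by
    intro n
    obtain ⟨g, hg⟩ := psi_iter_continuous hM hSF hUopen hA f n
    rw [hE]
    simp only [hg]
    exact isOpen_lt ((Complex.continuous_re.comp hcont).sub
      (Complex.continuous_re.comp g.continuous)) continuous_const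
  have hEmono : ∀ m n, m ≤ n → E m ⊆ E n := by
    intro m n hmn y hy
    rw [hE, Set.mem_setOf_eq] at hy ⊢
    have : ((psiFun U Φ)^[m] ⇑f y).re ≤ ((psiFun U Φ)^[n] ⇑f y).re := by
      clear hy
      induction n with
      | zero => rw [Nat.le_zero.mp hmn]
      | succ n ihn =>
        rcases Nat.lt_or_ge m (n + 1) with h | h
        · exact (ihn (Nat.lt_succ_iff.mp h)).trans (hmonore n y)
        · rw [Nat.le_antisymm hmn h]
    linarith
  have hcover : Set.univ ⊆ ⋃ n, E n := by
    intro y _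
    have := (Complex.continuous_re.tendsto (q₀ y)).comp (hqtend y)
    have h2 : ∀ᶠ n in atTop, |(q₀ y).re - ((psiFun U Φ)^[n] ⇑f y).re| < ε := by
      have := Metric.tendsto_nhds.mp this ε hε
      simpa [Real.dist_eq, abs_sub_comm, Function.comp] using this
    obtain ⟨n, hn⟩ := h2.exists
    exact Set.mem_iUnion.mpr ⟨n, lt_of_abs_lt hn⟩
  obtain ⟨t, ht⟩ := isCompact_univ.elim_finite_subcover E hEopen hcover
  set N : ℕ := t.sup id with hN
  have hEN : Set.univ ⊆ E N := by
    intro y hy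
    obtain ⟨n, hnt, hn⟩ := Set.mem_iUnion₂.mp (ht hy)
    exact hEmono n N (Finset.le_sup (f := id) hnt) hn
  filter_upwards [eventually_ge_atTop N] with n hn
  intro y
  have hyE : y ∈ E n := hEmono N n hn (hEN (Set.mem_univ y))
  rw [hE, Set.mem_setOf_eq] at hyE
  have hle := (Complex.le_def.mp (hqle n y)).1
  have hqy : q y = q₀ y := rfl
  rw [hqy, dist_of_real (hqim y) (hiterim n y)]
  rw [abs_of_nonneg (by linarith)]
  exact hyE
/-- The key element of `L`: positive on `U`, vanishing on `∂U`. -/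
lemma key_element (hUopen : IsOpen U)
    (hbd : ∃ a b : K, a ∈ Uᶜ ∧ b ∈ Uᶜ ∧ a ≠ b)
    (hM : IsMarkovOperator Φ) (hSF : HasStrongFeller Φ)
    (hA : CondA U Φ) (hB : CondB U Φ) :
    ∃ g : C(K, ℂ), g ∈ Lset U Φ ∧ (∀ x ∈ Uᶜ, g x = 0) ∧ ∀ z ∈ U, g z ≠ 0 := by
  obtain ⟨a, b, haU, hbU, hab⟩ := hbd
  obtain ⟨ha, hax, halt, haim, hare, hage⟩ := exists_barrier hA haU
  -- the nonconstant fixed point h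
  obtain ⟨h, hfix, him, hbdry, hhle, -⟩ := build_limit hM hSF hUopen hA ha haim hage
  have hha : h a = 0 := by rw [hbdry a haU, hax]
  have hhb : h b < 0 := by rw [hbdry b hbU]; exact halt b (Ne.symm hab)
  have hhbne : h b ≠ 0 := ne_of_lt hhb
  have hnice : Nice ⇑h ‖h‖ := Nice.of_continuousMap h
  -- the function F = |h|²
  set F : C(K, ℂ) := ⟨fun z => ((‖h z‖ ^ 2 : ℝ) : ℂ),
    Complex.continuous_ofReal.comp ((h.continuous.norm).pow 2)⟩ with hFdef
  have hFim : ∀ y, (F y).im = 0 := fun y => Complex.ofReal_im _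
  have hFge : ∀ y, F y ≤ psiFun U Φ ⇑F y := by
    intro y
    by_cases hy : y ∈ U
    · exact psi_sq_ge hM hnice him hy (hfix y)
    · rw [psi_nmem _ hy]
  -- the limit q of the iterates of F
  obtain ⟨q, hqfix, hqim, hqbdry, hqle, hqtu⟩ := build_limit hM hSF hUopen hA F hFim hFge
  have hFq : ∀ y, F y ≤ q y := fun y => hqle 0 y
  have hqnice : Nice ⇑q ‖q‖ := Nice.of_continuousMap q
  have hFnice : Nice ⇑F ‖F‖ := Nice.of_continuousMap F
  refine ⟨q - F, ⟨h, funext hfix, ?_⟩, ?_, ?_⟩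
  · have : (fun y => (q - F) y + ((‖h y‖ ^ 2 : ℝ) : ℂ)) = ⇑q := by
      funext y
      have : F y = ((‖h y‖ ^ 2 : ℝ) : ℂ) := rfl
      rw [← this]
      simp
    rw [this]
    exact hqtu
  · intro x hx
    simp only [ContinuousMap.sub_apply]
    rw [hqbdry x hx, sub_self]
  · -- the main point: q > F on U
    intro z hz hcon
    simp only [ContinuousMap.sub_apply] at hcon
    have hqzFz : q z = F z := by
      have := sub_eq_zero.mp hcon
      exact this
    -- Step 1 : F = q everywhere, via condB applied to F - q
    have hFeqq : ∀ y, F y = q y := by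
      have hBapp := hB (F - q) (fun x => by
          simp only [ContinuousMap.sub_apply, Complex.sub_im, hFim x, hqim x]; ring)
        (fun u => by
          have h1 : psiFun U Φ (⇑(F - q)) u.1 = Φ (fun v : ↥U => (F - q) v.1) u :=
            psi_mem _ u.2
          rw [← h1]
          have h2 : ⇑(F - q) = fun y => F y + (-1 : ℂ) * q y := by
            funext y; simp only [ContinuousMap.sub_apply]; ring
          rw [h2, psi_add hM hFnice (hqnice.const_mul (-1)),
            psi_const_mul hM (-1) hqnice, hqfix u.1]
          simp only [ContinuousMap.sub_apply, neg_one_mul]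
          have := hFge u.1
          rw [Complex.le_def] at this ⊢
          constructor
          · simp only [Complex.sub_re, Complex.add_re, Complex.neg_re]
            linarith [this.1]
          · simp only [Complex.sub_im, Complex.add_im, Complex.neg_im]
            linarith [this.2])
        ⟨z, hz, fun x => by
          simp only [ContinuousMap.sub_apply]
          rw [hqzFz, sub_self]
          have := hFq x
          rw [Complex.le_def] at this ⊢
          constructor
          · simp only [Complex.sub_re, Complex.zero_re]; linarith [this.1]
          · simp only [Complex.sub_im, Complex.zero_im]; linarith [this.2]⟩
      intro y
      have h3 := hBapp y z
      simp only [ContinuousMap.sub_apply] at h3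
      rw [hqzFz, sub_self] at h3
      exact sub_eq_zero.mp h3
    -- Step 2 : F is a fixed point
    have hFfix : ∀ y, psiFun U Φ ⇑F y = F y := by
      intro y
      apply le_antisymm
      · have := hqle 1 y
        rw [Function.iterate_one] at this
        rw [hFeqq y]
        exact this
      · exact hFge y
    -- Step 3 : condB applied to G = -(h - h z)²
    set t : ℂ := h z with ht
    have htim : t.im = 0 := him z
    set G : C(K, ℂ) := -((h - ContinuousMap.const K t) * (h - ContinuousMap.const K t))
      with hGdef
    have hGapp : ∀ w, G w = -((h w - t) * (h w - t)) := fun w => by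
      simp [hGdef]
    have hGim : ∀ w, (G w).im = 0 := by
      intro w
      rw [hGapp w]
      have h5 : (h w - t).im = 0 := by rw [Complex.sub_im, him w, htim]; ring
      rw [Complex.neg_im, Complex.mul_im, h5]
      ring
    have hF2 : ∀ w, h w * h w = F w := by
      intro w
      apply Complex.ext
      · rw [Complex.mul_re, him w]
        have : (F w).re = ‖h w‖ ^ 2 := Complex.ofReal_re _
        rw [this, norm_sq_of_real (him w)]
        ring
      · rw [Complex.mul_im, him w]
        have : (F w).im = 0 := hFim w
        rw [this]
        ring
    have hGeq : ⇑G = fun w => (-(t * t)) + ((2 * t) * h w + (-1 : ℂ) * F w) := by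
      funext w
      rw [hGapp w, ← hF2 w]
      ring
    have hGfix : ∀ y, psiFun U Φ ⇑G y = G y := by
      intro y
      rw [hGeq]
      have hn1 : Nice (fun w => (-(t * t)) + (2 * t) * h w) (‖t * t‖ + ‖2 * t‖ * ‖h‖) := by
        constructor
        · exact measurable_const.add (hnice.1.const_mul _)
        · intro w
          calc ‖(-(t * t)) + (2 * t) * h w‖ ≤ ‖-(t * t)‖ + ‖(2 * t) * h w‖ := norm_add_le _ _
            _ ≤ ‖t * t‖ + ‖2 * t‖ * ‖h‖ := by
                rw [norm_neg, norm_mul (2 * t) (h w)]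
                exact add_le_add le_rfl
                  (mul_le_mul_of_nonneg_left (hnice.2 w) (norm_nonneg _))
      have hcomb : (fun w => (-(t * t)) + ((2 * t) * h w + (-1 : ℂ) * F w)) =
          fun w => ((-(t * t)) + (2 * t) * h w) + (-1 : ℂ) * F w := by
        funext w; ring
      rw [hcomb, psi_add hM hn1 (hFnice.const_mul (-1)), psi_const_mul hM (-1) hFnice,
        hFfix y]
      have h6 : (fun w => (-(t * t)) + (2 * t) * h w) = fun w => (-(t * t)) + (2 * t) * h w :=
        rfl
      rw [psi_affine hM hnice (-(t * t)) (2 * t) y, hfix y]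
    have hBapp2 := hB G hGim
      (fun u => by
        have h1 : psiFun U Φ (⇑G) u.1 = Φ (fun v : ↥U => G v.1) u := psi_mem _ u.2
        rw [← h1, hGfix u.1])
      ⟨z, hz, fun x => by
        have hGz : G z = 0 := by rw [hGapp z, ← ht]; simp
        rw [hGz, hGapp x]
        have h5 : (h x - t).im = 0 := by rw [Complex.sub_im, him x, htim]; ring
        rw [Complex.le_def]
        constructor
        · rw [Complex.neg_re, Complex.mul_re, h5]
          simp only [Complex.zero_re]
          nlinarith [sq_nonneg ((h x - t).re)]
        · rw [Complex.neg_im, Complex.mul_im, h5]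
          simp⟩
    have hGz : G z = 0 := by rw [hGapp z, ← ht]; simp
    have hGa : G a = 0 := by rw [hBapp2 a z, hGz]
    have hGb : G b = 0 := by rw [hBapp2 b z, hGz]
    have hta : h a = t := by
      have := hGa
      rw [hGapp a, neg_eq_zero, mul_self_eq_zero, sub_eq_zero] at this
      exact this
    have htb : h b = t := by
      have := hGb
      rw [hGapp b, neg_eq_zero, mul_self_eq_zero, sub_eq_zero] at this
      exact this
    rw [hha] at hta
    rw [htb, ← hta] at hhbne
    exact hhbne rfl

/-- Elements of `L` vanish on the boundary. -/
lemma Lset_vanish {g : C(K, ℂ)} (hg : g ∈ Lset U Φ) {x : K} (hx : x ∈ Uᶜ) : g x = 0 := by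
  obtain ⟨h, hfix, htu⟩ := hg
  have hpt := htu.tendsto_at x
  have hconst : ∀ n : ℕ, (psiFun U Φ)^[n] (fun z => ((‖h z‖ ^ 2 : ℝ) : ℂ)) x =
      ((‖h x‖ ^ 2 : ℝ) : ℂ) := fun n => psi_iter_nmem _ hx n
  simp only [hconst] at hpt
  have := tendsto_nhds_unique hpt tendsto_const_nhds
  exact add_eq_right.mp this
end Stmt17

open Stmt17 ContinuousMap in
set_option synthInstance.maxHeartbeats 1000000 in
/-- The norm-closed ideal of `C(K)` generated by
`L = {π(|h|²) − |h|² : h ∈ Fix(Ψ)}` equals the ideal of all `f ∈ C(K)`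
vanishing identically on `∂U`. -/
theorem stmt17 {K : Type*} [MetricSpace K] [CompactSpace K]
    [MeasurableSpace K] [BorelSpace K]
    (U : Set K) (hUopen : IsOpen U) (hUdense : Dense U)
    (hbd : ∃ a b : K, a ∈ Uᶜ ∧ b ∈ Uᶜ ∧ a ≠ b)
    (Φ : (↥U → ℂ) → (↥U → ℂ))
    (hM : IsMarkovOperator Φ) (hSF : HasStrongFeller Φ)
    (hA : CondA U Φ) (hB : CondB U Φ) :
    ((Ideal.span (Lset U Φ)).topologicalClosure : Set C(K, ℂ)) =
      {f : C(K, ℂ) | ∀ x ∈ Uᶜ, f x = 0} := by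
  obtain ⟨g, hgL, hgvan, hgne⟩ := key_element hUopen hbd hM hSF hA hB
  set I : Ideal C(K, ℂ) := Ideal.span (Lset U Φ) with hI
  have hspan_le : I ≤ idealOfSet ℂ U := by
    rw [hI, Ideal.span_le]
    intro f hf
    rw [SetLike.mem_coe, mem_idealOfSet]
    intro x hx
    exact Lset_vanish hf hx
  have hsetOf : setOfIdeal I = U := by
    apply Set.Subset.antisymm
    · intro x hx
      obtain ⟨f, hfI, hfx⟩ := mem_setOfIdeal.mp hx
      by_contra hxU
      exact hfx (mem_idealOfSet.mp (hspan_le hfI) hxU)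
    · intro z hz
      exact mem_setOfIdeal.mpr ⟨g, Ideal.subset_span hgL, hgne z hz⟩
  have h1 : (I.topologicalClosure : Set C(K, ℂ)) = closure (I : Set C(K, ℂ)) :=
    Submodule.topologicalClosure_coe _
  have h2 : idealOfSet ℂ (setOfIdeal I) = I.closure := idealOfSet_ofIdeal_eq_closure I
  have h3 : (I.closure : Set C(K, ℂ)) = closure (I : Set C(K, ℂ)) := Ideal.coe_closure I
  rw [h1, ← h3, ← h2, hsetOf]
  rfl
end

section
/- If f ∈ C(K) vanishes identically on ∂U, then the sequence {Ψ^n(f)}_{n≥1} converges uniformly on K to 0; equivalently, {Φ^n(f_U)}_{n≥1} converges uniformly on U to 0. -/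
open MeasureTheory Filter Topology ComplexOrder

/- ----------------- Auxiliary material ----------------- -/

/-- The supremum of the norms of the tail `u n, u (n+1), ...` at a point. -/
noncomputable def supTail {α : Type*} (u : ℕ → α → ℂ) (n : ℕ) (v : α) : ℝ :=
  ⨆ m : ℕ, ‖u (n + m) v‖


section Aux

variable {K : Type*} [MetricSpace K] [CompactSpace K] [MeasurableSpace K] [BorelSpace K]
  {U : Set K}

/-- Iterates of `psiFun` restricted to `U` are the iterates of `Φ`, and they fix
the boundary values. -/
lemma psi_iter {K : Type*} (U : Set K) (Φ : (↥U → ℂ) → (↥U → ℂ)) (f : K → ℂ) :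
    ∀ n : ℕ, (∀ v : ↥U, (psiFun U Φ)^[n] f v.1 = Φ^[n] (fun y : ↥U => f y.1) v) ∧
      (∀ x ∈ Uᶜ, (psiFun U Φ)^[n] f x = f x) := by
  intro n
  induction n with
  | zero => exact ⟨fun v => rfl, fun x _ => rfl⟩
  | succ n ih =>
    constructor
    · intro v
      rw [Function.iterate_succ_apply', Function.iterate_succ_apply']
      have h1 : (fun y : ↥U => ((psiFun U Φ)^[n] f) y.1) = Φ^[n] (fun y : ↥U => f y.1) :=
        funext fun y => ih.1 y
      show psiFun U Φ ((psiFun U Φ)^[n] f) v.1 = _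
      rw [psiFun, dif_pos v.2, h1]
    · intro x hx
      rw [Function.iterate_succ_apply']
      show psiFun U Φ ((psiFun U Φ)^[n] f) x = f x
      rw [psiFun, dif_neg hx]
      exact ih.2 x hx

/-- Basic properties of the iterates `Φ^[n] f₀`. -/
lemma uProps (Φ : (↥U → ℂ) → (↥U → ℂ)) (hSF : HasStrongFeller Φ)
    (P : ↥U → Measure ↥U) (hP : ∀ x, IsProbabilityMeasure (P x))
    (hrep : ∀ (x : ↥U) (g : ↥U → ℂ), Measurable g → (∃ C : ℝ, ∀ y, ‖g y‖ ≤ C) →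
      Φ g x = ∫ y, g y ∂(P x))
    (f0 : ↥U → ℂ) (hc : Continuous f0) {C : ℝ} (hC : ∀ v, ‖f0 v‖ ≤ C) :
    ∀ n, Continuous (Φ^[n] f0) ∧ (∀ v, ‖Φ^[n] f0 v‖ ≤ C) := by
  intro n
  induction n with
  | zero => exact ⟨hc, hC⟩
  | succ n ih =>
    have hmeas : Measurable (Φ^[n] f0) := ih.1.measurable
    have hbdd : ∃ C' : ℝ, ∀ y, ‖Φ^[n] f0 y‖ ≤ C' := ⟨C, ih.2⟩
    constructor
    · rw [Function.iterate_succ_apply']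
      exact hSF _ hmeas hbdd
    · intro v
      rw [Function.iterate_succ_apply', hrep v _ hmeas hbdd]
      haveI := hP v
      have := norm_integral_le_of_norm_le_const (μ := P v) (C := C)
        (ae_of_all _ ih.2) (f := Φ^[n] f0)
      simpa using this

/-- Step 1: barrier construction and uniform domination of the iterates. -/
lemma step1 (hUopen : IsOpen U)
    (Φ : (↥U → ℂ) → (↥U → ℂ))
    (P : ↥U → Measure ↥U) (hP : ∀ x, IsProbabilityMeasure (P x))
    (hrep : ∀ (x : ↥U) (g : ↥U → ℂ), Measurable g → (∃ C : ℝ, ∀ y, ‖g y‖ ≤ C) →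
      Φ g x = ∫ y, g y ∂(P x))
    (hSF : HasStrongFeller Φ) (hA : CondA U Φ) (hne : Uᶜ.Nonempty)
    (f : C(K, ℂ)) (hf : ∀ x ∈ Uᶜ, f x = 0) {C : ℝ} (hC : ∀ x, ‖f x‖ ≤ C)
    {ε δ : ℝ} (hε : 0 < ε) (hδ : 0 < δ) :
    ∃ (w : C(K, ℝ)) (V : Set K), IsOpen V ∧ Uᶜ ⊆ V ∧ (∀ x ∈ V, w x < δ) ∧
      (∀ x, 0 ≤ w x) ∧ (∀ v : ↥U, ∫ y, w y.1 ∂(P v) ≤ w v.1) ∧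
      (∀ (n : ℕ) (v : ↥U), ‖Φ^[n] (fun y : ↥U => f y.1) v‖ ≤ ε + C * w v.1) := by
  classical
  have hC0 : 0 ≤ C := le_trans (norm_nonneg _) (hC hne.choose)
  -- the compact set where `f` is not small
  set F : Set K := {x | ε ≤ ‖f x‖} with hF
  have hFclosed : IsClosed F := isClosed_le continuous_const (by fun_prop)
  have hFU : F ⊆ U := by
    intro x hx
    by_contra hxU
    have h0 : ‖f x‖ = 0 := by rw [hf x hxU]; simp
    have h1 : ε ≤ ‖f x‖ := hx
    linarith
  -- integrability of bounded continuous real functions on U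
  have int_cont : ∀ (v : ↥U) (w : C(K, ℝ)), Integrable (fun y : ↥U => w y.1) (P v) := by
    intro v w
    haveI := hP v
    refine ⟨((w.continuous.comp continuous_subtype_val).measurable).aestronglyMeasurable, ?_⟩
    exact HasFiniteIntegral.of_bounded (C := ‖w‖)
      (ae_of_all _ fun y => w.norm_coe_le_norm y.1)
  -- barriers: for every boundary point, a nonnegative superharmonic function
  -- vanishing at that point and `≥ 1` on `F`
  have HB : ∀ b : ↥(Uᶜ), ∃ wb : C(K, ℝ), (∀ x, 0 ≤ wb x) ∧ wb b.1 = 0 ∧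
      (∀ x ∈ F, 1 ≤ wb x) ∧ (∀ v : ↥U, ∫ y, wb y.1 ∂(P v) ≤ wb v.1) := by
    rintro ⟨b, hb⟩
    obtain ⟨h, hb0, hneg, hsup⟩ := hA b hb
    -- the real part of the barrier
    set r : C(K, ℝ) := ⟨fun y => (h y).re, Complex.continuous_re.comp h.continuous⟩ with hr
    have hrneg : ∀ y : K, y ≠ b → r y < 0 := by
      intro y hy
      have := hneg y hy
      rw [Complex.lt_def] at this
      simpa [hr] using this.1
    have hrzero : r b = 0 := by simp [hr, hb0]
    have hrle : ∀ y, r y ≤ 0 := by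
      intro y
      by_cases hy : y = b
      · simp [hy, hrzero]
      · exact (hrneg y hy).le
    have hreal : ∀ v : ↥U, h v.1 = ((r v.1 : ℝ) : ℂ) := by
      intro v
      have hv : (v : K) ≠ b := fun hvb => hb (hvb ▸ v.2)
      have := hneg v.1 hv
      rw [Complex.lt_def] at this
      apply Complex.ext
      · simp [hr]
      · simpa using this.2
    obtain ⟨m, hmpos, hmF⟩ : ∃ m : ℝ, 0 < m ∧ ∀ x ∈ F, m ≤ -r x := by
      by_cases hFne : F.Nonempty
      · have hFcpt : IsCompact F := hFclosed.isCompact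
        obtain ⟨y₀, hy₀F, hy₀⟩ := hFcpt.exists_isMaxOn hFne r.continuous.continuousOn
        have hy₀b : y₀ ≠ b := fun hh => hb (hh ▸ hFU hy₀F)
        refine ⟨-r y₀, by linarith [hrneg y₀ hy₀b], fun x hx => ?_⟩
        have := hy₀ hx
        simp only [Set.mem_setOf_eq] at this
        linarith
      · exact ⟨1, one_pos, fun x hx => absurd ⟨x, hx⟩ hFne⟩
    refine ⟨⟨fun y => -r y / m, by fun_prop⟩, ?_, ?_, ?_, ?_⟩
    · intro x
      simp only [ContinuousMap.coe_mk]
      have := hrle x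
      exact div_nonneg (by linarith) hmpos.le
    · simp [hrzero]
    · intro x hx
      simp only [ContinuousMap.coe_mk]
      rw [le_div_iff₀ hmpos, one_mul]
      exact hmF x hx
    · intro v
      haveI := hP v
      -- subharmonicity of `r` from condition (A)
      have hrep1 : Φ (fun y : ↥U => h y.1) v = ((∫ y, r y.1 ∂(P v) : ℝ) : ℂ) := by
        have heq : (fun y : ↥U => h y.1) = fun y : ↥U => ((r y.1 : ℝ) : ℂ) :=
          funext fun y => hreal y
        rw [heq, hrep v (fun y : ↥U => ((r y.1 : ℝ) : ℂ))
          (by fun_prop)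
          ⟨‖r‖, fun y => by simpa using r.norm_coe_le_norm y.1⟩]
        exact integral_ofReal
      have hsub : r v.1 ≤ ∫ y, r y.1 ∂(P v) := by
        have := hsup v
        rw [hrep1, hreal v, Complex.real_le_real] at this
        exact this
      have hint : ∫ y, ((⟨fun y => -r y / m, by fun_prop⟩ : C(K, ℝ)) y.1) ∂(P v)
          = (-∫ y, r y.1 ∂(P v)) / m := by
        simp only [ContinuousMap.coe_mk]
        rw [integral_div, integral_neg]
      rw [hint]
      simp only [ContinuousMap.coe_mk]
      gcongr
  choose W hW0 hWb hWF hWsup using HB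
  -- finite subcover of the compact boundary
  have hBcpt : IsCompact (Uᶜ) := hUopen.isClosed_compl.isCompact
  have hcover : Uᶜ ⊆ ⋃ b : ↥(Uᶜ), {x : K | W b x < δ} := by
    intro b hb
    exact Set.mem_iUnion.2 ⟨⟨b, hb⟩, by simp [hWb ⟨b, hb⟩, hδ]⟩
  obtain ⟨t, ht⟩ := hBcpt.elim_finite_subcover (fun b : ↥(Uᶜ) => {x : K | W b x < δ})
    (fun b => isOpen_lt (W b).continuous continuous_const) hcover
  have htne : t.Nonempty := by
    obtain ⟨b, hb⟩ := hne
    obtain ⟨i, hit, _⟩ := Set.mem_iUnion₂.1 (ht hb)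
    exact ⟨i, hit⟩
  set w : C(K, ℝ) := t.inf' htne W with hw
  have hwapp : ∀ x, w x = t.inf' htne fun b => W b x := by
    intro x
    rw [hw]
    simp [ContinuousMap.inf'_apply]
  have hwle : ∀ b ∈ t, ∀ x, w x ≤ W b x := by
    intro b hbt x
    rw [hwapp]
    exact Finset.inf'_le _ hbt
  refine ⟨w, ⋃ b ∈ t, {x : K | W b x < δ}, ?_, ?_, ?_, ?_, ?_, ?_⟩
  · exact isOpen_biUnion fun b _ => isOpen_lt (W b).continuous continuous_const
  · intro x hx
    obtain ⟨i, hit, hxi⟩ := Set.mem_iUnion₂.1 (ht hx)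
    exact Set.mem_biUnion hit hxi
  · intro x hx
    obtain ⟨i, hit, hxi⟩ := Set.mem_iUnion₂.1 hx
    exact lt_of_le_of_lt (hwle i hit x) hxi
  · intro x
    rw [hwapp]
    exact Finset.le_inf' _ _ fun b _ => hW0 b x
  · intro v
    rw [hwapp]
    refine Finset.le_inf' _ _ fun b hbt => ?_
    refine le_trans (integral_mono (int_cont v w) (int_cont v (W b)) ?_) (hWsup b v)
    intro y
    exact hwle b hbt y.1
  · -- domination of the iterates, by induction
    have hwF : ∀ x ∈ F, 1 ≤ w x := by
      intro x hx
      rw [hwapp]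
      exact Finset.le_inf' _ _ fun b _ => hWF b x hx
    have hw0 : ∀ x, 0 ≤ w x := fun x => by
      rw [hwapp]; exact Finset.le_inf' _ _ fun b _ => hW0 b x
    have hwsup : ∀ v : ↥U, ∫ y, w y.1 ∂(P v) ≤ w v.1 := by
      intro v
      rw [hwapp]
      refine Finset.le_inf' _ _ fun b hbt => ?_
      refine le_trans (integral_mono (int_cont v w) (int_cont v (W b)) ?_) (hWsup b v)
      exact fun y => hwle b hbt y.1
    intro n
    induction n with
    | zero =>
      intro v
      by_cases hv : ε ≤ ‖f v.1‖
      · have h1 : 1 ≤ w v.1 := hwF v.1 hv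
        have : C ≤ C * w v.1 := le_mul_of_one_le_right hC0 h1
        calc ‖f v.1‖ ≤ C := hC v.1
        _ ≤ ε + C * w v.1 := by linarith
      · push_neg at hv
        have := mul_nonneg hC0 (hw0 v.1)
        calc ‖f v.1‖ ≤ ε := hv.le
        _ ≤ ε + C * w v.1 := by linarith
    | succ n ih =>
      intro v
      haveI := hP v
      have hu := uProps Φ hSF P hP hrep (fun y : ↥U => f y.1)
        (f.continuous.comp continuous_subtype_val) (fun v => hC v.1) n
      rw [Function.iterate_succ_apply',
        hrep v _ hu.1.measurable ⟨C, hu.2⟩]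
      calc ‖∫ y, Φ^[n] (fun y : ↥U => f y.1) y ∂(P v)‖
          ≤ ∫ y, ‖Φ^[n] (fun y : ↥U => f y.1) y‖ ∂(P v) := norm_integral_le_integral_norm _
        _ ≤ ∫ y, (ε + C * w y.1) ∂(P v) := by
            refine integral_mono ?_ ?_ ih
            · exact ⟨hu.1.measurable.norm.aestronglyMeasurable,
                HasFiniteIntegral.of_bounded (C := C) (ae_of_all _ fun y => by
                  simpa using hu.2 y)⟩
            · exact (integrable_const ε).add ((int_cont v w).const_mul C)
        _ = ε + C * ∫ y, w y.1 ∂(P v) := by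
            rw [integral_add (integrable_const ε) ((int_cont v w).const_mul C),
              integral_const, integral_const_mul]
            simp
        _ ≤ ε + C * w v.1 := by
            have := hwsup v
            nlinarith [hwsup v, hC0]

end Aux

section SupTail

variable {α : Type*} {u : ℕ → α → ℂ} {C : ℝ}

lemma supTail_bddAbove (hC : ∀ n v, ‖u n v‖ ≤ C) (n : ℕ) (v : α) :
    BddAbove (Set.range fun m => ‖u (n + m) v‖) :=
  ⟨C, by rintro _ ⟨m, rfl⟩; exact hC _ _⟩

lemma le_supTail (hC : ∀ n v, ‖u n v‖ ≤ C) (n m : ℕ) (v : α) :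
    ‖u (n + m) v‖ ≤ supTail u n v :=
  le_ciSup (supTail_bddAbove hC n v) m

lemma supTail_nonneg (hC : ∀ n v, ‖u n v‖ ≤ C) (n : ℕ) (v : α) :
    0 ≤ supTail u n v :=
  le_trans (norm_nonneg _) (le_supTail hC n 0 v)

lemma supTail_le (hC : ∀ n v, ‖u n v‖ ≤ C) (n : ℕ) (v : α) :
    supTail u n v ≤ C :=
  ciSup_le fun m => hC _ _

lemma supTail_le_of (hC : ∀ n v, ‖u n v‖ ≤ C) {n : ℕ} {v : α} {c : ℝ}
    (h : ∀ m, ‖u (n + m) v‖ ≤ c) : supTail u n v ≤ c :=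
  ciSup_le h

lemma supTail_anti (hC : ∀ n v, ‖u n v‖ ≤ C) (v : α) :
    Antitone fun n => supTail u n v := by
  refine antitone_nat_of_succ_le fun n => ?_
  refine ciSup_le fun m => ?_
  have : n + 1 + m = n + (m + 1) := by omega
  rw [this]
  exact le_supTail hC n (m + 1) v

lemma supTail_measurable [MeasurableSpace α] (hm : ∀ n, Measurable (u n))
    (n : ℕ) : Measurable (supTail u n) :=
  Measurable.iSup fun m => (hm (n + m)).norm

end SupTail

section Aux2

variable {K : Type*} [MetricSpace K] [CompactSpace K] [MeasurableSpace K] [BorelSpace K]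
  {U : Set K}

/-- Step 2: the tail suprema tend to zero pointwise on `U`. -/
lemma step2 (hUopen : IsOpen U)
    (Φ : (↥U → ℂ) → (↥U → ℂ))
    (P : ↥U → Measure ↥U) (hP : ∀ x, IsProbabilityMeasure (P x))
    (hrep : ∀ (x : ↥U) (g : ↥U → ℂ), Measurable g → (∃ C : ℝ, ∀ y, ‖g y‖ ≤ C) →
      Φ g x = ∫ y, g y ∂(P x))
    (hSF : HasStrongFeller Φ) (hA : CondA U Φ) (hB : CondB U Φ) (hne : Uᶜ.Nonempty)
    (f : C(K, ℂ)) (hf : ∀ x ∈ Uᶜ, f x = 0) {C : ℝ} (hC : ∀ x, ‖f x‖ ≤ C) :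
    ∀ v : ↥U, Tendsto (fun n => supTail (fun n => Φ^[n] (fun y : ↥U => f y.1)) n v)
      atTop (𝓝 0) := by
  classical
  have hC0 : 0 ≤ C := le_trans (norm_nonneg _) (hC hne.choose)
  set u : ℕ → ↥U → ℂ := fun n => Φ^[n] (fun y : ↥U => f y.1) with hu
  have huP : ∀ n, Continuous (u n) ∧ ∀ v, ‖u n v‖ ≤ C :=
    uProps Φ hSF P hP hrep _ (f.continuous.comp continuous_subtype_val) (fun v => hC v.1)
  have hub : ∀ n v, ‖u n v‖ ≤ C := fun n => (huP n).2
  have hum : ∀ n, Measurable (u n) := fun n => (huP n).1.measurable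
  set S : ℕ → ↥U → ℝ := supTail u with hS
  have hSm : ∀ n, Measurable (S n) := supTail_measurable hum
  set N : ↥U → ℝ := fun v => ⨅ n, S n v with hN
  have hNbdd : ∀ v, BddBelow (Set.range fun n => S n v) :=
    fun v => ⟨0, by rintro _ ⟨n, rfl⟩; exact supTail_nonneg hub n v⟩
  have hNm : Measurable N := Measurable.iInf hSm
  have hNle : ∀ n v, N v ≤ S n v := fun n v => ciInf_le (hNbdd v) n
  have hN0 : ∀ v, 0 ≤ N v := fun v => le_ciInf fun n => supTail_nonneg hub n v
  have hNC : ∀ v, N v ≤ C := fun v => le_trans (hNle 0 v) (supTail_le hub 0 v)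
  have hNnorm : ∀ v, ‖N v‖ ≤ C := fun v => by
    rw [Real.norm_eq_abs, abs_of_nonneg (hN0 v)]; exact hNC v
  have hStend : ∀ v, Tendsto (fun n => S n v) atTop (𝓝 (N v)) :=
    fun v => tendsto_atTop_ciInf (supTail_anti hub v) (hNbdd v)
  -- integrability of bounded measurable real functions
  have int_bdd : ∀ (v : ↥U) (r : ↥U → ℝ) (_ : Measurable r) (c : ℝ) (_ : ∀ y, ‖r y‖ ≤ c),
      Integrable r (P v) := by
    intro v r hr c hc
    haveI := hP v
    exact ⟨hr.aestronglyMeasurable, HasFiniteIntegral.of_bounded (C := c) (ae_of_all _ hc)⟩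
  have hSnorm : ∀ n y, ‖S n y‖ ≤ C := fun n y => by
    rw [Real.norm_eq_abs, abs_of_nonneg (supTail_nonneg hub n y)]; exact supTail_le hub n y
  -- N is subharmonic
  have hNsub : ∀ v : ↥U, N v ≤ ∫ y, N y ∂(P v) := by
    intro v
    haveI := hP v
    have h2 : ∀ n, N v ≤ ∫ y, S n y ∂(P v) := by
      intro n
      refine le_trans (hNle (n + 1) v) ?_
      refine supTail_le_of hub fun m => ?_
      have hnm : n + 1 + m = (n + m) + 1 := by omega
      rw [hnm]
      have : u ((n + m) + 1) v = ∫ y, u (n + m) y ∂(P v) := by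
        show Φ^[(n + m) + 1] (fun y : ↥U => f y.1) v = ∫ y, u (n + m) y ∂(P v)
        rw [Function.iterate_succ_apply']
        exact hrep v _ (hum (n + m)) ⟨C, hub (n + m)⟩
      rw [this]
      refine le_trans (norm_integral_le_integral_norm _) ?_
      refine integral_mono (int_bdd v _ (hum (n + m)).norm C
        (fun y => by simpa using hub (n + m) y)) (int_bdd v _ (hSm n) C (hSnorm n)) ?_
      intro y
      exact le_supTail hub n m y
    have h1 : Tendsto (fun n => ∫ y, S n y ∂(P v)) atTop (𝓝 (∫ y, N y ∂(P v))) := by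
      refine tendsto_integral_of_dominated_convergence (fun _ => C)
        (fun n => (hSm n).aestronglyMeasurable) (integrable_const C)
        (fun n => ae_of_all _ fun y => hSnorm n y) (ae_of_all _ fun y => hStend y)
    exact ge_of_tendsto h1 (Eventually.of_forall h2)
  -- the function T N
  set TN : ↥U → ℝ := fun v => ∫ y, N y ∂(P v) with hTN
  have hTNrep : ∀ v : ↥U, Φ (fun y : ↥U => ((N y : ℝ) : ℂ)) v = ((TN v : ℝ) : ℂ) := by
    intro v
    rw [hrep v (fun y : ↥U => ((N y : ℝ) : ℂ)) (by exact Complex.measurable_ofReal.comp hNm)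
      ⟨C, fun y => by simpa using hNnorm y⟩]
    exact integral_ofReal
  have hTNcont : Continuous TN := by
    have h1 : Continuous (Φ (fun y : ↥U => ((N y : ℝ) : ℂ))) :=
      hSF _ (Complex.measurable_ofReal.comp hNm) ⟨C, fun y => by simpa using hNnorm y⟩
    have h2 : TN = fun v => (Φ (fun y : ↥U => ((N y : ℝ) : ℂ)) v).re := by
      funext v
      rw [hTNrep v]
      simp
    rw [h2]
    exact Complex.continuous_re.comp h1
  have hTNnonneg : ∀ v, 0 ≤ TN v := by
    intro v
    haveI := hP v
    exact integral_nonneg hN0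
  have hNleTN : ∀ v, N v ≤ TN v := hNsub
  have hTNnorm : ∀ v, ‖TN v‖ ≤ C := by
    intro v
    haveI := hP v
    have := norm_integral_le_of_norm_le_const (μ := P v) (C := C)
      (ae_of_all _ hNnorm) (f := N)
    simpa using this
  have hTNsub : ∀ v : ↥U, TN v ≤ ∫ y, TN y ∂(P v) := by
    intro v
    exact integral_mono (int_bdd v _ hNm C hNnorm)
      (int_bdd v _ hTNcont.measurable C hTNnorm) hNleTN
  -- boundary estimate for TN
  have hbound : ∀ η : ℝ, 0 < η → ∃ V : Set K, IsOpen V ∧ Uᶜ ⊆ V ∧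
      ∀ v : ↥U, v.1 ∈ V → TN v < η := by
    intro η hη
    obtain ⟨w, V, hVopen, hVsub, hVlt, hw0, hwsup, hdom⟩ :=
      step1 hUopen Φ P hP hrep hSF hA hne f hf hC
        (show (0:ℝ) < η/4 by linarith) (show (0:ℝ) < η/(2*(C+1)) by positivity)
    refine ⟨V, hVopen, hVsub, fun v hv => ?_⟩
    haveI := hP v
    have int_w : Integrable (fun y : ↥U => w y.1) (P v) :=
      int_bdd v _ (w.continuous.comp continuous_subtype_val).measurable ‖w‖
        (fun y => w.norm_coe_le_norm y.1)
    have hNw : ∀ y : ↥U, N y ≤ η/4 + C * w y.1 := by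
      intro y
      refine le_trans (hNle 0 y) (supTail_le_of hub fun m => ?_)
      simpa using hdom (0 + m) y
    have h3 : TN v ≤ η/4 + C * w v.1 := by
      calc TN v ≤ ∫ y, (η/4 + C * w y.1) ∂(P v) := by
            refine integral_mono (int_bdd v _ hNm C hNnorm) ?_ hNw
            exact (integrable_const _).add (int_w.const_mul C)
        _ = η/4 + C * ∫ y, w y.1 ∂(P v) := by
            rw [integral_add (integrable_const _) (int_w.const_mul C),
              integral_const, integral_const_mul]
            simp
        _ ≤ η/4 + C * w v.1 := by nlinarith [hwsup v, hC0]
    have h4 : C * w v.1 ≤ η/2 := by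
      have h5 : w v.1 < η/(2*(C+1)) := hVlt v.1 hv
      have h6 : C * w v.1 ≤ C * (η/(2*(C+1))) :=
        mul_le_mul_of_nonneg_left h5.le hC0
      have h7 : C * (η/(2*(C+1))) ≤ η/2 := by
        rw [mul_div_assoc', div_le_div_iff₀ (by positivity) (by norm_num : (0:ℝ) < 2)]
        nlinarith
      linarith
    linarith
  -- the continuous extension G of TN by zero
  set G : K → ℝ := fun x => if hx : x ∈ U then TN ⟨x, hx⟩ else 0 with hG
  have hGU : ∀ v : ↥U, G v.1 = TN v := fun v => dif_pos v.2
  have hGb : ∀ x ∈ Uᶜ, G x = 0 := fun x hx => dif_neg hx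
  have hGnonneg : ∀ x, 0 ≤ G x := by
    intro x
    by_cases hx : x ∈ U
    · rw [show G x = TN ⟨x, hx⟩ from dif_pos hx]; exact hTNnonneg _
    · rw [show G x = 0 from dif_neg hx]
  have hGcont : Continuous G := by
    rw [continuous_iff_continuousAt]
    intro x
    by_cases hx : x ∈ U
    · have h1 : ContinuousOn G U := by
        rw [continuousOn_iff_continuous_restrict]
        have : U.restrict G = TN := funext fun v => hGU v
        exact hTNcont.congr fun v => (hGU v).symm
      exact h1.continuousAt (hUopen.mem_nhds hx)
    · have hx0 : G x = 0 := hGb x hx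
      rw [ContinuousAt, hx0]
      rw [Metric.tendsto_nhds]
      intro η hη
      obtain ⟨V, hVopen, hVsub, hVlt⟩ := hbound η hη
      filter_upwards [hVopen.mem_nhds (hVsub hx)] with y hy
      rw [Real.dist_eq, sub_zero, abs_of_nonneg (hGnonneg y)]
      by_cases hyU : y ∈ U
      · rw [show G y = TN ⟨y, hyU⟩ from dif_pos hyU]; exact hVlt ⟨y, hyU⟩ hy
      · rw [show G y = 0 from dif_neg hyU]; exact hη
  set gC : C(K, ℂ) := ⟨fun x => ((G x : ℝ) : ℂ), Complex.continuous_ofReal.comp hGcont⟩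
    with hgC
  have him : ∀ x : K, (gC x).im = 0 := fun x => by simp [hgC]
  have hsubh : ∀ v : ↥U, gC v.1 ≤ Φ (fun y : ↥U => gC y.1) v := by
    intro v
    have heq : (fun y : ↥U => gC y.1) = fun y : ↥U => ((TN y : ℝ) : ℂ) := by
      funext y
      simp only [hgC, ContinuousMap.coe_mk]
      rw [hGU y]
    rw [heq, hrep v (fun y : ↥U => ((TN y : ℝ) : ℂ))
      (by exact Complex.measurable_ofReal.comp hTNcont.measurable)
      ⟨C, fun y => by simpa using hTNnorm y⟩,
      show (∫ y, ((TN y : ℝ) : ℂ) ∂(P v)) = ((∫ y, TN y ∂(P v) : ℝ) : ℂ) from integral_ofReal]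
    have : gC v.1 = ((TN v : ℝ) : ℂ) := by
      simp only [hgC, ContinuousMap.coe_mk]; rw [hGU v]
    rw [this, Complex.real_le_real]
    exact hTNsub v
  -- the maximum of G
  haveI : Nonempty K := ⟨hne.choose⟩
  obtain ⟨z, _, hz⟩ := isCompact_univ.exists_isMaxOn Set.univ_nonempty
    hGcont.continuousOn
  have hTN0 : ∀ v : ↥U, TN v ≤ 0 := by
    by_cases hzU : z ∈ U
    · have hconst := hB gC him hsubh
        ⟨z, hzU, fun x => by
          simp only [hgC, ContinuousMap.coe_mk]
          exact Complex.real_le_real.2 (hz (Set.mem_univ x))⟩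
      intro v
      have h1 : gC v.1 = gC hne.choose := hconst v.1 hne.choose
      simp only [hgC, ContinuousMap.coe_mk] at h1
      have h2 : G v.1 = G hne.choose := by exact_mod_cast h1
      rw [hGU v] at h2
      rw [h2, hGb _ hne.choose_spec]
    · intro v
      have h1 : G v.1 ≤ G z := hz (Set.mem_univ v.1)
      rw [hGU v] at h1
      rw [hGb z hzU] at h1
      exact h1
  have hNzero : ∀ v, N v = 0 :=
    fun v => le_antisymm (le_trans (hNleTN v) (hTN0 v)) (hN0 v)
  intro v
  have := hStend v
  rw [hNzero v] at this
  exact this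

end Aux2


/-- If `f ∈ C(K)` vanishes identically on `∂U`, then
`{Ψⁿ f}` converges uniformly on `K` to `0`; equivalently `{Φⁿ (f_U)}`
converges uniformly on `U` to `0`. -/
theorem stmt18 {K : Type*} [MetricSpace K] [CompactSpace K]
    [MeasurableSpace K] [BorelSpace K]
    (U : Set K) (hUopen : IsOpen U) (hUdense : Dense U)
    (hbd : ∃ a b : K, a ∈ Uᶜ ∧ b ∈ Uᶜ ∧ a ≠ b)
    (Φ : (↥U → ℂ) → (↥U → ℂ))
    (hM : IsMarkovOperator Φ) (hSF : HasStrongFeller Φ)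
    (hA : CondA U Φ) (hB : CondB U Φ)
    (f : C(K, ℂ)) (hf : ∀ x ∈ Uᶜ, f x = 0) :
    TendstoUniformly (fun n x => (psiFun U Φ)^[n] ⇑f x)
      (fun _ => (0 : ℂ)) atTop ∧
    TendstoUniformly (fun n (u : ↥U) => Φ^[n] (fun v : ↥U => f v.1) u)
      (fun _ => (0 : ℂ)) atTop := by
  classical
  obtain ⟨a, b, ha, hb, hab⟩ := hbd
  have hne : Uᶜ.Nonempty := ⟨a, ha⟩
  choose P hPspec using hM
  have hP : ∀ x, IsProbabilityMeasure (P x) := fun x => (hPspec x).1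
  have hrep : ∀ (x : ↥U) (g : ↥U → ℂ), Measurable g → (∃ C : ℝ, ∀ y, ‖g y‖ ≤ C) →
      Φ g x = ∫ y, g y ∂(P x) := fun x g hg hbdd => (hPspec x).2 g hg hbdd
  set C : ℝ := ‖f‖ with hCdef
  have hC : ∀ x : K, ‖f x‖ ≤ C := fun x => f.norm_coe_le_norm x
  have hC0 : 0 ≤ C := le_trans (norm_nonneg _) (hC a)
  set fU : ↥U → ℂ := fun y : ↥U => f y.1 with hfU
  set u : ℕ → ↥U → ℂ := fun n => Φ^[n] fU with hu
  have huP : ∀ n, Continuous (u n) ∧ ∀ v, ‖u n v‖ ≤ C :=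
    uProps Φ hSF P hP hrep _ (f.continuous.comp continuous_subtype_val) (fun v => hC v.1)
  have hub : ∀ n v, ‖u n v‖ ≤ C := fun n => (huP n).2
  have hum : ∀ n, Measurable (u n) := fun n => (huP n).1.measurable
  -- the key uniform estimate
  have key : ∀ ε : ℝ, 0 < ε → ∀ᶠ n in atTop, ∀ v : ↥U, ‖u n v‖ < ε := by
    intro ε hε
    obtain ⟨w, V, hVopen, hVsub, hVlt, hw0, hwsup, hdom⟩ :=
      step1 hUopen Φ P hP hrep hSF hA hne f hf hC
        (show (0:ℝ) < ε/4 by linarith) (show (0:ℝ) < ε/(4*(C+1)) by positivity)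
    set S : ℕ → ↥U → ℝ := supTail u with hS
    have hSm : ∀ n, Measurable (S n) := supTail_measurable hum
    have hSnorm : ∀ n y, ‖S n y‖ ≤ C := fun n y => by
      rw [Real.norm_eq_abs, abs_of_nonneg (supTail_nonneg hub n y)]
      exact supTail_le hub n y
    have hStend : ∀ v : ↥U, Tendsto (fun n => S n v) atTop (𝓝 0) :=
      step2 hUopen Φ P hP hrep hSF hA hB hne f hf hC
    set t : ℕ → ↥U → ℝ := fun n v => ∫ y, S n y ∂(P v) with ht
    have int_bdd : ∀ (v : ↥U) (r : ↥U → ℝ) (_ : Measurable r) (c : ℝ)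
        (_ : ∀ y, ‖r y‖ ≤ c), Integrable r (P v) := by
      intro v r hr c hc
      haveI := hP v
      exact ⟨hr.aestronglyMeasurable, HasFiniteIntegral.of_bounded (C := c) (ae_of_all _ hc)⟩
    have htcont : ∀ n, Continuous (t n) := by
      intro n
      have h1 : Continuous (Φ (fun y : ↥U => ((S n y : ℝ) : ℂ))) :=
        hSF _ (Complex.measurable_ofReal.comp (hSm n))
          ⟨C, fun y => by simpa using hSnorm n y⟩
      have h2 : t n = fun v => (Φ (fun y : ↥U => ((S n y : ℝ) : ℂ)) v).re := by
        funext v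
        rw [hrep v (fun y : ↥U => ((S n y : ℝ) : ℂ))
          (by exact Complex.measurable_ofReal.comp (hSm n))
          ⟨C, fun y => by simpa using hSnorm n y⟩,
          show (∫ y, ((S n y : ℝ) : ℂ) ∂(P v)) = ((∫ y, S n y ∂(P v) : ℝ) : ℂ)
            from integral_ofReal]
        simp [ht]
      rw [h2]
      exact Complex.continuous_re.comp h1
    have htanti : ∀ v : ↥U, Antitone fun n => t n v := by
      intro v
      intro n m hnm
      exact integral_mono (int_bdd v _ (hSm m) C (hSnorm m)) (int_bdd v _ (hSm n) C (hSnorm n))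
        (fun y => supTail_anti hub y hnm)
    have httend : ∀ v : ↥U, Tendsto (fun n => t n v) atTop (𝓝 0) := by
      intro v
      haveI := hP v
      have h1 : Tendsto (fun n => ∫ y, S n y ∂(P v)) atTop (𝓝 (∫ _ : ↥U, (0:ℝ) ∂(P v))) :=
        tendsto_integral_of_dominated_convergence (fun _ => C)
          (fun n => (hSm n).aestronglyMeasurable) (integrable_const C)
          (fun n => ae_of_all _ fun y => hSnorm n y) (ae_of_all _ fun y => hStend y)
      simpa using h1
    -- compactness of the part of U away from the boundary
    set A' : Set ↥U := {v : ↥U | v.1 ∉ V} with hA'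
    have hA'cpt : IsCompact A' := by
      rw [Subtype.isCompact_iff]
      have himg : Subtype.val '' A' = Vᶜ := by
        ext x
        constructor
        · rintro ⟨v, hv, rfl⟩
          exact hv
        · intro hx
          have hxU : x ∈ U := by
            by_contra hxx
            exact hx (hVsub hxx)
          exact ⟨⟨x, hxU⟩, hx, rfl⟩
      rw [himg]
      exact hVopen.isClosed_compl.isCompact
    have hcover : A' ⊆ ⋃ n : ℕ, {v : ↥U | t n v < ε/4} := by
      intro v _
      have h1 : ∀ᶠ n in atTop, t n v < ε/4 :=
        (httend v).eventually_lt_const (by positivity)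
      obtain ⟨n, hn⟩ := h1.exists
      exact Set.mem_iUnion.2 ⟨n, hn⟩
    obtain ⟨fs, hfs⟩ := hA'cpt.elim_finite_subcover (fun n => {v : ↥U | t n v < ε/4})
      (fun n => isOpen_lt (htcont n) continuous_const) hcover
    set n₀ : ℕ := fs.sup id with hn₀
    have hA'small : ∀ v ∈ A', t n₀ v < ε/4 := by
      intro v hv
      obtain ⟨n, hnfs, hvn⟩ := Set.mem_iUnion₂.1 (hfs hv)
      exact lt_of_le_of_lt (htanti v (Finset.le_sup (f := id) hnfs)) hvn
    filter_upwards [eventually_ge_atTop (n₀ + 1)] with n hn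
    intro v
    by_cases hv : v.1 ∈ V
    · have h1 : ‖u n v‖ ≤ ε/4 + C * w v.1 := hdom n v
      have h2 : C * w v.1 ≤ C * (ε/(4*(C+1))) :=
        mul_le_mul_of_nonneg_left (hVlt v.1 hv).le hC0
      have h3 : C * (ε/(4*(C+1))) ≤ ε/4 := by
        rw [mul_div_assoc', div_le_div_iff₀ (by positivity) (by norm_num : (0:ℝ) < 4)]
        nlinarith
      linarith
    · have hvA : v ∈ A' := hv
      have hn1 : n - 1 + 1 = n := by omega
      have h1 : u n v = ∫ y, u (n - 1) y ∂(P v) := by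
        conv_lhs => rw [← hn1]
        show Φ^[(n-1) + 1] fU v = _
        rw [Function.iterate_succ_apply']
        exact hrep v _ (hum (n - 1)) ⟨C, hub (n - 1)⟩
      have h2 : ‖u n v‖ ≤ t n₀ v := by
        rw [h1]
        refine le_trans (norm_integral_le_integral_norm _) ?_
        refine integral_mono (int_bdd v _ (hum (n-1)).norm C
          (fun y => by simpa using hub (n-1) y)) (int_bdd v _ (hSm n₀) C (hSnorm n₀)) ?_
        intro y
        have : n - 1 = n₀ + (n - 1 - n₀) := by omega
        rw [this]
        exact le_supTail hub n₀ (n - 1 - n₀) y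
      have := hA'small v hvA
      linarith
  constructor
  · rw [Metric.tendstoUniformly_iff]
    intro ε hε
    filter_upwards [key ε hε] with n hn
    intro x
    by_cases hx : x ∈ U
    · rw [(psi_iter U Φ f n).1 ⟨x, hx⟩]
      rw [dist_comm, dist_zero_right]
      exact hn ⟨x, hx⟩
    · rw [(psi_iter U Φ f n).2 x hx, hf x hx]
      simpa using hε
  · rw [Metric.tendstoUniformly_iff]
    intro ε hε
    filter_upwards [key ε hε] with n hn
    intro v
    rw [dist_comm, dist_zero_right]
    exact hn v
end
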